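/- arXiv:2512.07008 — 5 statements merged into one kernel-verified Lean document; each statement's English description precedes it below -/
import Mathlib

section
/- For n ≥ 3, the total number of symmetric valleys over all Catalan words of length n equals (3n-2)·C_{n-1} − (1/2)·∑_{k=1}^{n} C(2k,k). -/
open List Finset

def IsCatalanWord (w : List ℕ) : Prop :=
  (∀ x ∈ w, 0 < x) ∧ (0 < w.length → w.getD 0 0 = 1) ∧
    ∀ i, i + 1 < w.length → w.getD (i + 1) 0 ≤ w.getD i 0 + 1

def Step (x y : ℕ) : Prop := 1 ≤ y ∧ y ≤ x + 1

def IsCat (w : List ℕ) : Prop := List.Chain' Step w ∧ ∀ h ∈ w.head?, h = 1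

theorem List.chain'_append {α : Type*} {R : α → α → Prop} {l₁ l₂ : List α} :
    List.Chain' R (l₁ ++ l₂) ↔ List.Chain' R l₁ ∧ List.Chain' R l₂ ∧
      ∀ x ∈ l₁.getLast?, ∀ y ∈ l₂.head?, R x y := List.isChain_append

theorem List.chain'_cons' {α : Type*} {R : α → α → Prop} {x : α} {l : List α} :
    List.Chain' R (x :: l) ↔ (∀ y ∈ head? l, R x y) ∧ List.Chain' R l := List.isChain_cons

theorem List.chain'_map {α β : Type*} {R : α → α → Prop} (f : β → α) {l : List β} :
    List.Chain' R (map f l) ↔ List.Chain' (fun a b : β => R (f a) (f b)) l := List.isChain_map f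

theorem List.chain'_nil {α : Type*} {R : α → α → Prop} : List.Chain' R [] := by
  unfold List.Chain'; simp

theorem List.chain'_singleton {α : Type*} {R : α → α → Prop} (a : α) : List.Chain' R [a] := by
  unfold List.Chain'; simp

lemma chain'_iff_getElem {R : ℕ → ℕ → Prop} {l : List ℕ} :
    List.Chain' R l ↔ ∀ i (h : i + 1 < l.length), R l[i] l[i+1] := by
  show List.IsChain R l ↔ _; rw [List.isChain_iff_getElem]

lemma isCat_pos {w : List ℕ} (h : IsCat w) : ∀ x ∈ w, 0 < x := by
  obtain ⟨hc, hh⟩ := h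
  intro x hx
  cases w with
  | nil => simp at hx
  | cons a t =>
    rcases mem_cons.1 hx with rfl | hx
    · have : x = 1 := hh x rfl
      omega
    · obtain ⟨i, hi, rfl⟩ := List.getElem_of_mem hx
      have := chain'_iff_getElem.1 hc i (by simpa using Nat.succ_lt_succ hi)
      have h1 := this.1
      simp at h1 ⊢; omega

lemma isCat_iff {w : List ℕ} : IsCatalanWord w ↔ IsCat w := by
  constructor
  · rintro ⟨hpos, hhead, hstep⟩
    refine ⟨chain'_iff_getElem.2 fun i hi => ?_, ?_⟩
    · refine ⟨hpos _ (List.getElem_mem _), ?_⟩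
      have := hstep i hi
      rwa [List.getD_eq_getElem _ _ hi, List.getD_eq_getElem _ _ (by omega)] at this
    · intro h hh
      cases w with
      | nil => simp at hh
      | cons a t =>
        simp only [head?_cons, Option.mem_def, Option.some.injEq] at hh
        subst hh
        simpa using hhead (by simp)
  · rintro ⟨hc, hh⟩
    refine ⟨isCat_pos ⟨hc, hh⟩, ?_, ?_⟩
    · intro hl
      cases w with
      | nil => simp at hl
      | cons a t => simpa using hh a rfl
    · intro i hi
      have := chain'_iff_getElem.1 hc i hi
      rw [List.getD_eq_getElem _ _ hi, List.getD_eq_getElem _ _ (show i < w.length by omega)]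
      exact this.2
lemma isCat_append_singleton {v : List ℕ} {b : ℕ} :
    IsCat (v ++ [b]) ↔ IsCat v ∧ 1 ≤ b ∧ b ≤ v.getLastD 0 + 1 := by
  unfold IsCat
  rw [List.chain'_append]
  cases v with
  | nil =>
    simp only [List.nil_append, List.getLastD]
    constructor
    · rintro ⟨_, h⟩
      have hb := h b rfl
      subst hb
      exact ⟨⟨List.chain'_nil, by simp⟩, le_refl 1, by omega⟩
    · rintro ⟨_, h1, h2⟩
      have : b = 1 := by omega
      subst this
      exact ⟨⟨List.chain'_nil, List.chain'_singleton _, by simp⟩, by simp⟩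
  | cons a t =>
    have hne : a :: t ≠ [] := by simp
    constructor
    · rintro ⟨⟨h1, h2, h3⟩, hh⟩
      have hlink := h3 ((a :: t).getLast hne) (by simp [List.getLast?_eq_getLast hne]) b rfl
      refine ⟨⟨h1, fun h hmem => ?_⟩, hlink.1, ?_⟩
      · apply hh h
        simp only [head?_cons, Option.mem_def, Option.some.injEq] at hmem ⊢
        simpa using hmem
      rw [List.getLastD_eq_getLast?, List.getLast?_eq_getLast hne]
      exact hlink.2
    · rintro ⟨⟨h1, hh⟩, hb1, hb2⟩
      refine ⟨⟨h1, by simp [List.chain'_singleton], ?_⟩, ?_⟩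
      · intro x hx y hy
        simp only [head?_cons, Option.mem_def, Option.some.injEq] at hy
        subst hy
        rw [List.getLast?_eq_getLast hne, Option.mem_def, Option.some.injEq] at hx
        subst hx
        refine ⟨hb1, ?_⟩
        rwa [List.getLastD_eq_getLast?, List.getLast?_eq_getLast hne] at hb2
      · intro h hmem
        rw [List.cons_append, head?_cons, Option.mem_def, Option.some.injEq] at hmem
        exact hh h (by simp [hmem])

def CWF : ℕ → Finset (List ℕ)
  | 0 => {[]}
  | (n+1) => (CWF n).biUnion fun w => (Finset.Icc 1 (w.getLastD 0 + 1)).image fun b => w ++ [b]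

lemma mem_CWF {n : ℕ} {w : List ℕ} : w ∈ CWF n ↔ IsCat w ∧ w.length = n := by
  induction n generalizing w with
  | zero =>
    simp only [CWF, Finset.mem_singleton, List.length_eq_zero_iff]
    constructor
    · rintro rfl; exact ⟨⟨List.chain'_nil, by simp⟩, rfl⟩
    · rintro ⟨_, rfl⟩; rfl
  | succ n ih =>
    simp only [CWF, Finset.mem_biUnion, Finset.mem_image, Finset.mem_Icc]
    constructor
    · rintro ⟨v, hv, b, ⟨hb1, hb2⟩, rfl⟩
      obtain ⟨hcat, hlen⟩ := ih.1 hv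
      exact ⟨isCat_append_singleton.2 ⟨hcat, hb1, hb2⟩, by simp [hlen]⟩
    · rintro ⟨hcat, hlen⟩
      have hne : w ≠ [] := by rintro rfl; simp at hlen
      refine ⟨w.dropLast, ih.2 ⟨?_, ?_⟩, w.getLast hne, ?_, List.dropLast_append_getLast hne⟩
      · have := (List.dropLast_append_getLast hne) ▸ hcat
        exact (isCat_append_singleton.1 this).1
      · simp [List.length_dropLast, hlen]
      · have := (List.dropLast_append_getLast hne) ▸ hcat
        have h2 := isCat_append_singleton.1 this
        exact ⟨h2.2.1, h2.2.2⟩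

-- chain' map lemmas
lemma chain'_map_add {l : List ℕ} (h : List.Chain' Step l) :
    List.Chain' Step (l.map (· + 1)) := by
  rw [List.chain'_map]
  exact h.imp fun a b hab => ⟨by have := hab.1; omega, by have := hab.2; omega⟩

lemma chain'_map_sub {l : List ℕ} (h2 : ∀ x ∈ l, 1 < x) (h : List.Chain' Step l) :
    List.Chain' Step (l.map (· - 1)) := by
  rw [List.chain'_map]
  refine chain'_iff_getElem.2 fun i hi => ?_
  have hs := chain'_iff_getElem.1 h i hi
  have ha : 1 < l[i] := h2 _ (List.getElem_mem (by omega))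
  have hb : 1 < l[i+1] := h2 _ (List.getElem_mem hi)
  obtain ⟨hs1, hs2⟩ := hs
  exact ⟨by omega, by omega⟩

def pbig : ℕ → Bool := fun x => decide (1 < x)

lemma head?_takeWhile_subset {p : ℕ → Bool} {l : List ℕ} :
    ∀ y ∈ (l.takeWhile p).head?, y ∈ l.head? := by
  cases l with
  | nil => simp
  | cons a t =>
    by_cases h : p a = true <;> simp [List.takeWhile_cons, h]

lemma head?_dropWhile_false {p : ℕ → Bool} {l : List ℕ} :
    ∀ y ∈ (l.dropWhile p).head?, p y = false := by
  intro y hy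
  have := List.head?_dropWhile_not p l
  revert this
  cases h : (l.dropWhile p).head? with
  | none => simp [h] at hy
  | some z =>
    intro hz
    simp only [h, Option.mem_def, Option.some.injEq] at hy
    subst hy; exact hz

lemma step_head_tail {w : List ℕ} (hne : w ≠ []) (hc : List.Chain' Step w) :
    ∀ y ∈ w.tail.head?, Step (w.head hne) y := by
  have := List.cons_head_tail hne
  rw [← this] at hc
  exact (List.chain'_cons'.1 hc).1

lemma decomp_card (n : ℕ) :
    (CWF (n+1)).card =
      ((Finset.range (n+1)).sigma fun j => (CWF j) ×ˢ (CWF (n - j))).card := by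
  apply Finset.card_nbij'
    (i := fun w => ⟨(w.tail.takeWhile pbig).length,
        ((w.tail.takeWhile pbig).map (· - 1), w.tail.dropWhile pbig)⟩)
    (j := fun x => 1 :: (x.2.1.map (· + 1) ++ x.2.2))
  · -- forward membership
    intro w hw
    obtain ⟨⟨hc, hh⟩, hlen⟩ := mem_CWF.1 hw
    have hne : w ≠ [] := by rintro rfl; simp at hlen
    have hpos : ∀ x ∈ w, 0 < x := isCat_pos ⟨hc, hh⟩
    have hhead : w.head hne = 1 := hh _ (List.head?_eq_head hne)
    set A := w.tail.takeWhile pbig with hA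
    set B := w.tail.dropWhile pbig with hB
    have hAB : A ++ B = w.tail := List.takeWhile_append_dropWhile
    have hAbig : ∀ x ∈ A, 1 < x := fun x hx => by
      simpa [pbig] using List.mem_takeWhile_imp hx
    have htlen : w.tail.length = n := by
      rw [List.length_tail, hlen]; rfl
    have hAle : A.length ≤ n := by
      calc A.length ≤ w.tail.length := (List.takeWhile_prefix _).length_le
        _ = n := htlen
    have hct : List.Chain' Step w.tail := hc.tail
    have hBlen : B.length = n - A.length := by
      have := congrArg List.length hAB
      simp only [List.length_append] at this
      omega
    simp only [Finset.mem_coe, Finset.mem_sigma, Finset.mem_range, Finset.mem_product, ← hA, ← hB]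
    refine ⟨by omega, ?_, ?_⟩
    · -- A.map (· - 1) ∈ CWF A.length
      refine mem_CWF.2 ⟨⟨?_, ?_⟩, by simp⟩
      · exact chain'_map_sub hAbig (hct.prefix (List.takeWhile_prefix _))
      · intro h hmem
        rw [List.head?_map] at hmem
        cases hA0 : A.head? with
        | none => simp [hA0] at hmem
        | some y =>
          simp only [hA0, Option.map_some, Option.mem_def, Option.some.injEq] at hmem
          have hyt : y ∈ w.tail.head? := head?_takeWhile_subset y hA0
          have hyS : Step (w.head hne) y := step_head_tail hne hc y hyt
          have hy2 : 1 < y := hAbig y (List.mem_of_mem_head? hA0)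
          have : y ≤ 2 := by have := hyS.2; omega
          omega
    · -- B ∈ CWF (n - A.length)
      refine mem_CWF.2 ⟨⟨hct.suffix (List.dropWhile_suffix _), ?_⟩, hBlen⟩
      intro h hmem
      have hle : h ≤ 1 := by
        have := head?_dropWhile_false h hmem
        simpa [pbig] using this
      have hpos' : 0 < h := by
        apply hpos
        have h1 : h ∈ B := List.mem_of_mem_head? hmem
        have h2 : B ⊆ w.tail := (List.dropWhile_suffix _).subset
        exact (List.tail_sublist w).subset (h2 h1)
      omega
  · -- backward membership
    rintro ⟨j, v, u⟩ hx
    simp only [Finset.mem_coe, Finset.mem_sigma, Finset.mem_range, Finset.mem_product] at hx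
    obtain ⟨hj, hv, hu⟩ := hx
    obtain ⟨⟨hcv, hhv⟩, hvlen⟩ := mem_CWF.1 hv
    obtain ⟨⟨hcu, hhu⟩, hulen⟩ := mem_CWF.1 hu
    refine mem_CWF.2 ⟨⟨?_, ?_⟩, ?_⟩
    · rw [List.chain'_cons']
      constructor
      · intro y hy
        rw [List.head?_append] at hy
        cases hv0 : (v.map (· + 1)).head? with
        | some z =>
          rw [hv0] at hy
          simp only [Option.or_some, Option.some_or, Option.mem_def, Option.some.injEq] at hy
          subst hy
          rw [List.head?_map] at hv0
          cases hv1 : v.head? with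
          | none => simp [hv1] at hv0
          | some z' =>
            have := hhv z' hv1
            subst this
            simp only [hv1, Option.map_some, Option.some.injEq] at hv0
            exact ⟨by omega, by omega⟩
        | none =>
          rw [hv0] at hy
          simp only [Option.none_or, Option.mem_def] at hy
          have := hhu y hy
          subst this
          exact ⟨le_refl 1, by omega⟩
      · rw [List.chain'_append]
        refine ⟨chain'_map_add hcv, hcu, ?_⟩
        intro x hx y hy
        have := hhu y hy
        subst this
        exact ⟨le_refl 1, by omega⟩
    · intro h hmem
      simp at hmem
      omega
    · simp only [List.length_cons, List.length_append, List.length_map, hvlen, hulen]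
      omega
  · -- left inverse
    intro w hw
    obtain ⟨⟨hc, hh⟩, hlen⟩ := mem_CWF.1 hw
    have hne : w ≠ [] := by rintro rfl; simp at hlen
    have hhead : w.head hne = 1 := hh _ (List.head?_eq_head hne)
    have hAbig : ∀ x ∈ w.tail.takeWhile pbig, 1 < x := fun x hx => by
      simpa [pbig] using List.mem_takeWhile_imp hx
    simp only []
    have hmm : (List.map (· - 1) (w.tail.takeWhile pbig)).map (· + 1)
        = w.tail.takeWhile pbig := by
      rw [List.map_map]
      have : ∀ x ∈ w.tail.takeWhile pbig, ((· + 1) ∘ (· - 1)) x = id x := by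
        intro x hx
        have := hAbig x hx
        simp only [Function.comp_apply, id_eq]
        omega
      rw [List.map_congr_left this, List.map_id]
    rw [hmm, List.takeWhile_append_dropWhile]
    conv_rhs => rw [← List.cons_head_tail hne]
    rw [hhead]
  · -- right inverse
    rintro ⟨j, v, u⟩ hx
    simp only [Finset.mem_coe, Finset.mem_sigma, Finset.mem_range, Finset.mem_product] at hx
    obtain ⟨hj, hv, hu⟩ := hx
    obtain ⟨⟨hcv, hhv⟩, hvlen⟩ := mem_CWF.1 hv
    obtain ⟨⟨hcu, hhu⟩, hulen⟩ := mem_CWF.1 hu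
    have hvbig : ∀ x ∈ v.map (· + 1), pbig x = true := by
      intro x hx
      obtain ⟨y, hy, rfl⟩ := List.mem_map.1 hx
      have := isCat_pos ⟨hcv, hhv⟩ y hy
      simp [pbig]; omega
    have htw : (v.map (· + 1) ++ u).takeWhile pbig = v.map (· + 1) := by
      rw [List.takeWhile_append]
      rw [List.takeWhile_eq_self_iff.2 hvbig]
      simp only [if_pos rfl]
      cases u with
      | nil => simp
      | cons b u' =>
        have hb := hhu b rfl
        subst hb
        simp [List.takeWhile_cons, pbig]
    have hdw : (v.map (· + 1) ++ u).dropWhile pbig = u := by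
      rw [List.dropWhile_append]
      have : (v.map (· + 1)).dropWhile pbig = [] := by
        rw [List.dropWhile_eq_nil_iff]
        exact hvbig
      rw [this]
      simp only [List.isEmpty_nil, if_pos rfl]
      cases u with
      | nil => rfl
      | cons b u' =>
        have hb := hhu b rfl
        subst hb
        simp [List.dropWhile_cons, pbig]
    simp only [List.tail_cons, htw, hdw]
    have hmm : (v.map (· + 1)).map (· - 1) = v := by
      rw [List.map_map]
      have : ∀ x ∈ v, ((· - 1) ∘ (· + 1)) x = id x := by
        intro x _; simp
      rw [List.map_congr_left this, List.map_id]
    have hl : (v.map (· + 1)).length = j := by simp [hvlen]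
    subst hl
    rw [hmm]

lemma card_CWF (n : ℕ) : (CWF n).card = catalan n := by
  induction n using Nat.strong_induction_on with
  | _ n ih =>
    match n with
    | 0 => simp [CWF, catalan_zero]
    | (m+1) =>
      rw [decomp_card, Finset.card_sigma]
      rw [catalan_succ', Finset.Nat.sum_antidiagonal_eq_sum_range_succ_mk]
      apply Finset.sum_congr rfl
      intro j hj
      rw [Finset.mem_range] at hj
      rw [Finset.card_product, ih j (by omega), ih (m - j) (by omega)]

def OnesF (m : ℕ) : Finset (List ℕ × ℕ) :=
  ((CWF m) ×ˢ Finset.range m).filter fun p => p.1.getD p.2 0 = 1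

lemma head?_take_subset {l : List ℕ} {i : ℕ} :
    ∀ y ∈ (l.take i).head?, y ∈ l.head? := by
  cases l with
  | nil => simp
  | cons a t => cases i with
    | zero => simp
    | succ k => simp

lemma card_OnesF (m : ℕ) :
    (OnesF m).card = ∑ i ∈ Finset.range m, catalan i * catalan (m - i) := by
  have : (OnesF m).card =
      ((Finset.range m).sigma fun i => (CWF i) ×ˢ (CWF (m - i))).card := by
    apply Finset.card_nbij'
      (i := fun p => ⟨p.2, (p.1.take p.2, p.1.drop p.2)⟩)
      (j := fun x => (x.2.1 ++ x.2.2, x.2.1.length))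
    · rintro ⟨w, i⟩ hp
      simp only [Finset.mem_coe, OnesF, Finset.mem_filter, Finset.mem_product, Finset.mem_range] at hp
      obtain ⟨⟨hw, hi⟩, hone⟩ := hp
      obtain ⟨⟨hc, hh⟩, hlen⟩ := mem_CWF.1 hw
      simp only [Finset.mem_coe, Finset.mem_sigma, Finset.mem_range, Finset.mem_product]
      refine ⟨hi, ?_, ?_⟩
      · refine mem_CWF.2 ⟨⟨hc.prefix (List.take_prefix _ _), ?_⟩, ?_⟩
        · intro h hmem
          exact hh h (head?_take_subset h hmem)
        · rw [List.length_take, hlen]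
          omega
      · refine mem_CWF.2 ⟨⟨hc.suffix (List.drop_suffix _ _), ?_⟩, ?_⟩
        · intro h hmem
          rw [List.head?_drop] at hmem
          rw [List.getD_eq_getElem?_getD] at hone
          rw [Option.mem_def] at hmem
          rw [hmem] at hone
          simpa using hone
        · rw [List.length_drop, hlen]
    · rintro ⟨i, u, v⟩ hx
      simp only [Finset.mem_coe, Finset.mem_sigma, Finset.mem_range, Finset.mem_product] at hx
      obtain ⟨hi, hu, hv⟩ := hx
      obtain ⟨⟨hcu, hhu⟩, hulen⟩ := mem_CWF.1 hu
      obtain ⟨⟨hcv, hhv⟩, hvlen⟩ := mem_CWF.1 hv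
      have hvne : v ≠ [] := by
        intro h; rw [h] at hvlen; simp at hvlen; omega
      have hvhead : v.head hvne = 1 := hhv _ (List.head?_eq_head hvne)
      simp only [Finset.mem_coe, OnesF, Finset.mem_filter, Finset.mem_product, Finset.mem_range]
      refine ⟨⟨?_, ?_⟩, ?_⟩
      · refine mem_CWF.2 ⟨⟨?_, ?_⟩, ?_⟩
        · rw [List.chain'_append]
          refine ⟨hcu, hcv, fun x _ y hy => ?_⟩
          have := hhv y hy
          subst this
          exact ⟨le_refl 1, by omega⟩
        · intro h hmem
          rw [List.head?_append] at hmem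
          cases hu0 : u.head? with
          | some z =>
            rw [hu0] at hmem
            simp only [Option.or_some, Option.some_or, Option.mem_def, Option.some.injEq] at hmem
            subst hmem
            exact hhu _ hu0
          | none =>
            rw [hu0] at hmem
            simp only [Option.none_or] at hmem
            exact hhv _ hmem
        · rw [List.length_append, hulen, hvlen]; omega
      · rw [hulen]; omega
      · rw [List.getD_eq_getElem?_getD, List.getElem?_append_right (le_refl _)]
        simp only [Nat.sub_self]
        rw [← List.head?_eq_getElem? ]
        rw [List.head?_eq_head hvne, hvhead]
        rfl
    · rintro ⟨w, i⟩ hp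
      simp only [Finset.mem_coe, OnesF, Finset.mem_filter, Finset.mem_product, Finset.mem_range] at hp
      obtain ⟨⟨hw, hi⟩, _⟩ := hp
      have hlen := (mem_CWF.1 hw).2
      simp only [List.take_append_drop]
      rw [List.length_take, hlen]
      simp only [Prod.mk.injEq]
      exact ⟨by simp, by omega⟩
    · rintro ⟨i, u, v⟩ hx
      simp only [Finset.mem_coe, Finset.mem_sigma, Finset.mem_range, Finset.mem_product] at hx
      obtain ⟨hi, hu, hv⟩ := hx
      have hulen := (mem_CWF.1 hu).2
      simp only [List.take_left, List.drop_left, List.length_take]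
      have : u.length = i := hulen
      subst this
      rfl
  rw [this, Finset.card_sigma]
  apply Finset.sum_congr rfl
  intro j _
  rw [Finset.card_product, card_CWF, card_CWF]

lemma card_OnesF_eq (m : ℕ) : (OnesF m).card + catalan m = catalan (m + 1) := by
  rw [card_OnesF, catalan_succ', Finset.Nat.sum_antidiagonal_eq_sum_range_succ_mk,
    Finset.sum_range_succ]
  simp

def WF (m : ℕ) : Finset (List ℕ × ℕ) :=
  ((CWF m) ×ˢ Finset.range m).filter fun p => ¬ (p.1.getD p.2 0 = 1)

lemma card_WF_add (m : ℕ) : (WF m).card + (OnesF m).card = m * catalan m := by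
  have h := Finset.card_filter_add_card_filter_not
    (s := (CWF m) ×ˢ Finset.range m) (p := fun p => p.1.getD p.2 0 = 1)
  have : ((CWF m) ×ˢ Finset.range m).card = m * catalan m := by
    rw [Finset.card_product, card_CWF, Finset.card_range, mul_comm]
  rw [← this, ← h]
  rw [Nat.add_comm]
  rfl

lemma entries_le {n : ℕ} {w : List ℕ} (hw : w ∈ CWF n) : ∀ x ∈ w, x ≤ n := by
  induction n generalizing w with
  | zero => simp only [CWF, Finset.mem_singleton] at hw; subst hw; simp
  | succ n ih =>
    simp only [CWF, Finset.mem_biUnion, Finset.mem_image, Finset.mem_Icc] at hw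
    obtain ⟨v, hv, b, ⟨hb1, hb2⟩, rfl⟩ := hw
    intro x hx
    rcases List.mem_append.1 hx with hx | hx
    · exact le_trans (ih hv x hx) (Nat.le_succ n)
    · simp only [List.mem_singleton] at hx
      subst hx
      cases hv' : v with
      | nil => subst hv'; simp [List.getLastD] at hb2; omega
      | cons c t =>
        have hne : v ≠ [] := by rw [hv']; simp
        have : v.getLastD 0 ≤ n := by
          rw [List.getLastD_eq_getLast?, List.getLast?_eq_getLast hne]
          exact ih hv _ (List.getLast_mem hne)
        omega

-- valley chain lemmas
lemma rep_chain {a : ℕ} (ha : 2 ≤ a) (v : List ℕ) :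
    ∀ k : ℕ, List.Chain' Step (List.replicate k (a - 1) ++ a :: v) ↔
      List.Chain' Step (a :: v) := by
  intro k
  induction k with
  | zero => simp
  | succ j ih =>
    rw [List.replicate_succ, List.cons_append, List.chain'_cons']
    rw [← ih]
    constructor
    · rintro ⟨_, h⟩; exact h
    · intro h
      refine ⟨?_, h⟩
      intro y hy
      cases j with
      | zero =>
        simp only [List.replicate_zero, List.nil_append, List.head?_cons,
          Option.mem_def, Option.some.injEq] at hy
        subst hy; exact ⟨by omega, by omega⟩
      | succ j' =>
        rw [List.replicate_succ, List.cons_append, List.head?_cons] at hy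
        simp only [Option.mem_def, Option.some.injEq] at hy
        subst hy; exact ⟨by omega, by omega⟩

lemma valley_chain {a ℓ : ℕ} (ha : 2 ≤ a) (hl : 1 ≤ ℓ) (v : List ℕ) :
    List.Chain' Step (a :: (List.replicate ℓ (a - 1) ++ a :: v)) ↔
      List.Chain' Step (a :: v) := by
  rw [List.chain'_cons']
  rw [rep_chain ha v ℓ]
  constructor
  · rintro ⟨_, h⟩; exact h
  · intro h
    refine ⟨?_, h⟩
    intro y hy
    obtain ⟨ℓ', rfl⟩ := Nat.exists_eq_add_of_le hl
    rw [Nat.add_comm 1 ℓ', List.replicate_succ, List.cons_append, List.head?_cons] at hy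
    simp only [Option.mem_def, Option.some.injEq] at hy
    subst hy; exact ⟨by omega, by omega⟩

lemma isCat_mid {u v : List ℕ} {a ℓ : ℕ} (ha : 2 ≤ a) (hl : 1 ≤ ℓ) :
    IsCat (u ++ a :: (List.replicate ℓ (a - 1) ++ a :: v)) ↔ IsCat (u ++ a :: v) := by
  unfold IsCat
  rw [List.chain'_append, List.chain'_append, valley_chain ha hl]
  rw [List.head?_append, List.head?_append]
  simp only [List.head?_cons]

lemma getD_append_cons (u v : List ℕ) (a : ℕ) :
    (u ++ a :: v).getD u.length 0 = a := by
  rw [List.getD_eq_getElem?_getD, List.getElem?_append_right (le_refl _)]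
  simp

lemma take_append_cons (u v : List ℕ) (a : ℕ) :
    (u ++ a :: v).take (u.length + 1) = u ++ [a] := by
  rw [List.take_append]
  simp

lemma drop_append_cons (u v : List ℕ) (a : ℕ) :
    (u ++ a :: v).drop (u.length + 1) = v := by
  rw [List.drop_append]
  simp

def VF (n : ℕ) : Finset (List ℕ × ℕ × ℕ × ℕ) :=
  ((CWF n) ×ˢ (Finset.range n ×ˢ (Finset.Icc 2 n ×ˢ Finset.Icc 1 n))).filter
    fun p => (p.1.drop p.2.1).take (p.2.2.2 + 2) =
      p.2.2.1 :: (List.replicate p.2.2.2 (p.2.2.1 - 1) ++ [p.2.2.1])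

-- pattern gives a decomposition
lemma pattern_split {w : List ℕ} {i a ℓ : ℕ}
    (hpat : (w.drop i).take (ℓ + 2) = a :: (List.replicate ℓ (a - 1) ++ [a])) :
    w = w.take i ++ (a :: (List.replicate ℓ (a - 1) ++ a :: w.drop (i + ℓ + 2)))
      ∧ (w.take i).length = i ∧ i + ℓ + 2 ≤ w.length := by
  have hlen2 : (ℓ + 2) ≤ (w.drop i).length := by
    have := congrArg List.length hpat
    simp only [List.length_take, List.length_cons, List.length_append,
      List.length_replicate, List.length_singleton] at this
    omega
  have hwd : w.length ≥ i + ℓ + 2 := by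
    rw [List.length_drop] at hlen2; omega
  refine ⟨?_, by rw [List.length_take]; omega, hwd⟩
  conv_lhs => rw [← List.take_append_drop i w]
  congr 1
  conv_lhs => rw [← List.take_append_drop (ℓ + 2) (w.drop i)]
  rw [hpat, List.drop_drop]
  simp [Nat.add_assoc]

lemma main_bij (n : ℕ) (hn : 3 ≤ n) :
    (VF n).card = ((Finset.Icc 1 (n - 2)).sigma fun ℓ => WF (n - 1 - ℓ)).card := by
  apply Finset.card_nbij'
    (i := fun p => ⟨p.2.2.2, (p.1.take (p.2.1 + 1) ++ p.1.drop (p.2.1 + p.2.2.2 + 2), p.2.1)⟩)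
    (j := fun x => (x.2.1.take (x.2.2 + 1) ++
        (List.replicate x.1 (x.2.1.getD x.2.2 0 - 1) ++
          (x.2.1.getD x.2.2 0) :: x.2.1.drop (x.2.2 + 1)), (x.2.2, (x.2.1.getD x.2.2 0, x.1))))
  · -- forward membership
    rintro ⟨w, i, a, ℓ⟩ hp
    simp only [Finset.mem_coe, VF, Finset.mem_filter, Finset.mem_product, Finset.mem_range,
      Finset.mem_Icc] at hp
    obtain ⟨⟨hw, hi, ⟨ha2, han⟩, hl1, hln⟩, hpat⟩ := hp
    obtain ⟨⟨hc, hh⟩, hlen⟩ := mem_CWF.1 hw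
    obtain ⟨hsplit, hulen, hbnd⟩ := pattern_split hpat
    rw [hlen] at hbnd
    set u := w.take i with hu
    set v := w.drop (i + ℓ + 2) with hv
    have hvlen : v.length = n - (i + ℓ + 2) := by
      rw [hv, List.length_drop, hlen]
    -- the image word
    have himg : w.take (i + 1) ++ w.drop (i + ℓ + 2) = u ++ a :: v := by
      have h1 : w.take (i + 1) = u ++ [a] := by
        conv_lhs => rw [hsplit]
        rw [show i + 1 = u.length + 1 by rw [hulen]]
        exact take_append_cons _ _ _
      rw [h1, List.append_assoc, List.singleton_append]
    simp only [Finset.mem_coe, Finset.mem_sigma, Finset.mem_Icc, Finset.mem_product,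
      Finset.mem_range, WF, Finset.mem_filter]
    refine ⟨⟨hl1, by omega⟩, ⟨?_, ?_⟩, ?_⟩
    · -- u ++ a :: v ∈ CWF (n - 1 - ℓ)
      rw [himg]
      refine mem_CWF.2 ⟨?_, ?_⟩
      · have : IsCat (u ++ a :: (List.replicate ℓ (a - 1) ++ a :: v)) := by
          rw [← hsplit]; exact ⟨hc, hh⟩
        exact (isCat_mid ha2 hl1).1 this
      · simp only [List.length_append, List.length_cons, hvlen]
        omega
    · -- i < n - 1 - ℓ
      omega
    · -- getD ≠ 1
      rw [himg, show i = u.length from hulen.symm, getD_append_cons]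
      omega
  · -- backward membership
    rintro ⟨ℓ, w', i⟩ hx
    simp only [Finset.mem_coe, Finset.mem_sigma, Finset.mem_Icc, WF, Finset.mem_filter,
      Finset.mem_product, Finset.mem_range] at hx
    obtain ⟨⟨hl1, hl2⟩, ⟨hw', hi⟩, hne1⟩ := hx
    obtain ⟨⟨hc, hh⟩, hlen⟩ := mem_CWF.1 hw'
    set m := n - 1 - ℓ with hm
    set a := w'.getD i 0 with ha
    have him : i < w'.length := by omega
    have haa : a = w'[i] := by rw [ha, List.getD_eq_getElem _ _ him]
    have ha2 : 2 ≤ a := by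
      have hpos : 0 < w'[i] := isCat_pos ⟨hc, hh⟩ _ (List.getElem_mem him)
      omega
    have han : a ≤ n := by
      have := entries_le hw' w'[i] (List.getElem_mem him)
      omega
    -- split w'
    have hsplit : w' = w'.take i ++ a :: w'.drop (i + 1) := by
      conv_lhs => rw [← List.take_append_drop i w']
      congr 1
      rw [haa]
      exact (List.getElem_cons_drop him).symm
    set u := w'.take i with hu
    set v := w'.drop (i + 1) with hv
    have hulen : u.length = i := by rw [hu, List.length_take]; omega
    have hvlen : v.length = m - (i + 1) := by rw [hv, List.length_drop, hlen]
    have htk : w'.take (i + 1) = u ++ [a] := by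
      conv_lhs => rw [hsplit]
      rw [show i + 1 = u.length + 1 by rw [hulen]]
      exact take_append_cons _ _ _
    have himg : w'.take (i + 1) ++ (List.replicate ℓ (a - 1) ++ a :: w'.drop (i + 1))
        = u ++ a :: (List.replicate ℓ (a - 1) ++ a :: v) := by
      rw [htk, List.append_assoc, List.singleton_append]
    simp only [Finset.mem_coe, VF, Finset.mem_filter, Finset.mem_product, Finset.mem_range, Finset.mem_Icc]
    rw [himg]
    have hwlen : (u ++ a :: (List.replicate ℓ (a - 1) ++ a :: v)).length = n := by
      simp only [List.length_append, List.length_cons, List.length_replicate, hulen, hvlen]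
      omega
    refine ⟨⟨?_, ?_, ⟨ha2, han⟩, ⟨hl1, by omega⟩⟩, ?_⟩
    · refine mem_CWF.2 ⟨?_, hwlen⟩
      apply (isCat_mid ha2 hl1).2
      rw [← hsplit]
      exact ⟨hc, hh⟩
    · omega
    · -- pattern
      rw [← ha]
      rw [show i = u.length from hulen.symm, List.drop_left]
      rw [show (ℓ + 2) = (ℓ + 1) + 1 from rfl, List.take_succ_cons]
      congr 1
      rw [show ℓ + 1 = (List.replicate ℓ (a-1)).length + 1 by simp]
      exact take_append_cons _ _ _
  · -- left inverse
    rintro ⟨w, i, a, ℓ⟩ hp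
    simp only [Finset.mem_coe, VF, Finset.mem_filter, Finset.mem_product, Finset.mem_range,
      Finset.mem_Icc] at hp
    obtain ⟨⟨hw, hi, ⟨ha2, han⟩, hl1, hln⟩, hpat⟩ := hp
    have hlen := (mem_CWF.1 hw).2
    obtain ⟨hsplit, hulen, hbnd⟩ := pattern_split hpat
    set u := w.take i with hu
    set v := w.drop (i + ℓ + 2) with hv
    have htk : w.take (i + 1) = u ++ [a] := by
      conv_lhs => rw [hsplit]
      rw [show i + 1 = u.length + 1 by rw [hulen]]
      exact take_append_cons _ _ _
    have himg : w.take (i + 1) ++ w.drop (i + ℓ + 2) = u ++ a :: v := by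
      rw [htk, List.append_assoc, List.singleton_append]
    simp only [himg]
    have hgd : (u ++ a :: v).getD i 0 = a := by
      rw [show i = u.length from hulen.symm, getD_append_cons]
    rw [hgd]
    have h1 : (u ++ a :: v).take (i + 1) = u ++ [a] := by
      rw [show i + 1 = u.length + 1 by rw [hulen]]
      exact take_append_cons _ _ _
    have h2 : (u ++ a :: v).drop (i + 1) = v := by
      rw [show i + 1 = u.length + 1 by rw [hulen]]
      exact drop_append_cons _ _ _
    rw [h1, h2]
    simp only [Prod.mk.injEq]
    refine ⟨?_, by simp⟩
    rw [List.append_assoc, List.singleton_append, ← hsplit]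
  · -- right inverse
    rintro ⟨ℓ, w', i⟩ hx
    simp only [Finset.mem_coe, Finset.mem_sigma, Finset.mem_Icc, WF, Finset.mem_filter,
      Finset.mem_product, Finset.mem_range] at hx
    obtain ⟨⟨hl1, hl2⟩, ⟨hw', hi⟩, hne1⟩ := hx
    obtain ⟨⟨hc, hh⟩, hlen⟩ := mem_CWF.1 hw'
    have him : i < w'.length := by omega
    set a := w'.getD i 0 with ha
    have haa : a = w'[i] := by rw [ha, List.getD_eq_getElem _ _ him]
    have hsplit : w' = w'.take i ++ a :: w'.drop (i + 1) := by
      conv_lhs => rw [← List.take_append_drop i w']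
      congr 1
      rw [haa]
      exact (List.getElem_cons_drop him).symm
    set u := w'.take i with hu
    set v := w'.drop (i + 1) with hv
    have hulen : u.length = i := by rw [hu, List.length_take]; omega
    have htk : w'.take (i + 1) = u ++ [a] := by
      conv_lhs => rw [hsplit]
      rw [show i + 1 = u.length + 1 by rw [hulen]]
      exact take_append_cons _ _ _
    -- the composite word
    set W := w'.take (i + 1) ++ (List.replicate ℓ (a - 1) ++ a :: v) with hW
    have hWeq : W = (u ++ a :: List.replicate ℓ (a - 1)) ++ a :: v := by
      rw [hW, htk]
      simp [List.append_assoc]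
    have hWtake : W.take (i + 1) = u ++ [a] := by
      rw [hW, htk]
      rw [show i + 1 = (u ++ [a]).length + 0 by simp [hulen]]
      rw [List.take_append]
      simp
    have hWdrop : W.drop (i + ℓ + 2) = v := by
      rw [hWeq]
      rw [show i + ℓ + 2 = (u ++ a :: List.replicate ℓ (a - 1)).length + 1 by
        simp [hulen]; omega]
      exact drop_append_cons _ _ _
    have hfin : W.take (i + 1) ++ W.drop (i + ℓ + 2) = w' := by
      rw [hWtake, hWdrop, List.append_assoc, List.singleton_append, ← hsplit]
    show (⟨ℓ, (W.take (i + 1) ++ W.drop (i + ℓ + 2), i)⟩ : (_ : ℕ) × (List ℕ × ℕ))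
        = ⟨ℓ, (w', i)⟩
    rw [hfin]

lemma cat_rec (m : ℕ) : (m + 2) * catalan (m + 1) = (4 * m + 2) * catalan m := by
  have h1 := succ_mul_catalan_eq_centralBinom (m + 1)
  have h2 := Nat.succ_mul_centralBinom_succ m
  have h3 := succ_mul_catalan_eq_centralBinom m
  apply Nat.eq_of_mul_eq_mul_left (show 0 < m + 1 by omega)
  calc (m + 1) * ((m + 2) * catalan (m + 1))
      = (m + 1) * ((m + 1 + 1) * catalan (m + 1)) := by ring_nf
    _ = (m + 1) * Nat.centralBinom (m + 1) := by rw [h1]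
    _ = 2 * (2 * m + 1) * Nat.centralBinom m := h2
    _ = 2 * (2 * m + 1) * ((m + 1) * catalan m) := by rw [← h3]
    _ = (m + 1) * ((4 * m + 2) * catalan m) := by ring

lemma centralBinom_succ_eq (m : ℕ) :
    (2 * (m + 1)).choose (m + 1) = (4 * m + 2) * catalan m := by
  have h1 : (2 * (m + 1)).choose (m + 1) = Nat.centralBinom (m + 1) := rfl
  have h2 := succ_mul_catalan_eq_centralBinom (m + 1)
  rw [h1, ← h2, show m + 1 + 1 = m + 2 from rfl, cat_rec]

lemma WF_card_q (m : ℕ) :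
    ((WF m).card : ℚ) = m * catalan m + catalan m - catalan (m + 1) := by
  have h1 := card_WF_add m
  have h2 := card_OnesF_eq m
  have h1' : ((WF m).card : ℚ) + (OnesF m).card = m * catalan m := by
    exact_mod_cast congrArg (Nat.cast : ℕ → ℚ) h1
  have h2' : ((OnesF m).card : ℚ) + catalan m = catalan (m + 1) := by
    exact_mod_cast congrArg (Nat.cast : ℕ → ℚ) h2
  linarith

lemma alg_sum (n : ℕ) (hn : 3 ≤ n) :
    ∑ m ∈ Finset.Icc 1 (n - 2), ((m : ℚ) * catalan m + catalan m - catalan (m + 1)) =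
      (3 * n - 2) * catalan (n - 1) -
        (1 / 2) * ∑ k ∈ Finset.Icc 1 n, ((2 * k).choose k : ℚ) := by
  induction n, hn using Nat.le_induction with
  | base =>
    have h1 : Finset.Icc 1 (3 - 2) = ({1} : Finset ℕ) := by decide
    have h2 : Finset.Icc 1 3 = ({1, 2, 3} : Finset ℕ) := by decide
    rw [h1, h2, Finset.sum_singleton, Finset.sum_insert (by decide),
      Finset.sum_insert (by decide), Finset.sum_singleton]
    have d1 : (2 * 1).choose 1 = 2 := rfl
    have d2 : (2 * 2).choose 2 = 6 := rfl
    have d3 : (2 * 3).choose 3 = 20 := rfl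
    have c2 : catalan (1 + 1) = 2 := catalan_two
    have c3 : catalan (3 - 1) = 2 := catalan_two
    rw [d1, d2, d3, c2, catalan_one]
    norm_num
  | succ n hn ih =>
    obtain ⟨k, rfl⟩ : ∃ k, n = k + 3 := ⟨n - 3, by omega⟩
    rw [show k + 3 - 2 = k + 1 from by omega, show k + 3 - 1 = k + 2 from by omega] at ih
    rw [show k + 3 + 1 - 2 = (k + 1) + 1 from by omega,
      Finset.sum_Icc_succ_top (by omega : (1:ℕ) ≤ k + 1 + 1),
      show k + 3 + 1 - 1 = k + 3 from by omega,
      show k + 3 + 1 = (k + 3) + 1 from rfl,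
      Finset.sum_Icc_succ_top (by omega : (1:ℕ) ≤ k + 3 + 1),
      ih]
    have hc1 : ((k : ℚ) + 4) * catalan (k + 3) = (4 * (k + 2) + 2) * catalan (k + 2) := by
      have h := congrArg (Nat.cast : ℕ → ℚ) (cat_rec (k + 2))
      push_cast at h
      push_cast
      linarith
    have hc2 : (((2 * (k + 3 + 1)).choose (k + 3 + 1) : ℕ) : ℚ)
        = (4 * (k + 3) + 2) * catalan (k + 3) := by
      have h := congrArg (Nat.cast : ℕ → ℚ) (centralBinom_succ_eq (k + 3))
      push_cast at h ⊢
      linarith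
    push_cast at hc1 hc2 ⊢
    ring_nf
    ring_nf at hc1 hc2
    linarith

/-- Total number of symmetric valleys (occurrences of a string a, (a-1)^ℓ, a with
a > 1, ℓ ≥ 1, at some position i) over all Catalan words of length n. -/
theorem total_symmetric_valleys (n : ℕ) (hn : 3 ≤ n) :
    (Nat.card {p : List ℕ × ℕ × ℕ × ℕ //
        IsCatalanWord p.1 ∧ p.1.length = n ∧
        2 ≤ p.2.2.1 ∧ 1 ≤ p.2.2.2 ∧
        (p.1.drop p.2.1).take (p.2.2.2 + 2) =
          p.2.2.1 :: (List.replicate p.2.2.2 (p.2.2.1 - 1) ++ [p.2.2.1])} : ℚ) =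
      (3 * n - 2) * catalan (n - 1) -
        (1 / 2) * ∑ k ∈ Finset.Icc 1 n, ((2 * k).choose k : ℚ) := by
  have hiff : ∀ p : List ℕ × ℕ × ℕ × ℕ,
      (IsCatalanWord p.1 ∧ p.1.length = n ∧
        2 ≤ p.2.2.1 ∧ 1 ≤ p.2.2.2 ∧
        (p.1.drop p.2.1).take (p.2.2.2 + 2) =
          p.2.2.1 :: (List.replicate p.2.2.2 (p.2.2.1 - 1) ++ [p.2.2.1])) ↔ p ∈ VF n := by
    rintro ⟨w, i, a, ℓ⟩
    simp only [Finset.mem_coe, VF, Finset.mem_filter, Finset.mem_product, Finset.mem_range, Finset.mem_Icc]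
    constructor
    · rintro ⟨hcat, hlen, ha2, hl1, hpat⟩
      have hw : w ∈ CWF n := mem_CWF.2 ⟨isCat_iff.1 hcat, hlen⟩
      obtain ⟨hsplit, hulen, hbnd⟩ := pattern_split hpat
      rw [hlen] at hbnd
      have haw : a ∈ w := by
        rw [hsplit]
        exact List.mem_append.2 (Or.inr List.mem_cons_self)
      exact ⟨⟨hw, by omega, ⟨ha2, entries_le hw a haw⟩, hl1, by omega⟩, hpat⟩
    · rintro ⟨⟨hw, hi, ⟨ha2, _⟩, hl1, _⟩, hpat⟩
      obtain ⟨hcat, hlen⟩ := mem_CWF.1 hw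
      exact ⟨isCat_iff.2 hcat, hlen, ha2, hl1, hpat⟩
  rw [Nat.card_congr (Equiv.subtypeEquivRight hiff), Nat.card_eq_fintype_card,
    Fintype.card_coe, main_bij n hn, Finset.card_sigma]
  push_cast
  have hre : ∑ ℓ ∈ Finset.Icc 1 (n - 2), ((WF (n - 1 - ℓ)).card : ℚ) =
      ∑ m ∈ Finset.Icc 1 (n - 2), ((WF m).card : ℚ) := by
    apply Finset.sum_nbij' (i := fun ℓ => n - 1 - ℓ) (j := fun m => n - 1 - m)
    · intro a ha; simp only [Finset.mem_Icc] at *; omega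
    · intro a ha; simp only [Finset.mem_Icc] at *; omega
    · intro a ha; simp only [Finset.mem_Icc] at ha; omega
    · intro a ha; simp only [Finset.mem_Icc] at ha; omega
    · intro a ha; rfl
  rw [hre]
  rw [Finset.sum_congr rfl fun m _ => WF_card_q m]
  exact alg_sum n hn
end

section
/- For n ≥ 4 and 1 ≤ ℓ ≤ n-3, the total number of ℓ-valleys over all Catalan words of length n equals C(2n-2ℓ-1, n-ℓ-3). -/
open Finset

/-- Ballot-type numbers: `W j c = C(2j+c, j) - C(2j+c, j+c+1)`. -/
def Wf (j c : ℕ) : ℤ := ((2*j+c).choose j : ℤ) - ((2*j+c).choose (j+c+1) : ℤ)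

lemma Wf_zero (c : ℕ) : Wf 0 c = 1 := by
  simp [Wf, Nat.choose_eq_zero_of_lt (by omega : c < 0 + c + 1)]

lemma pa (N k : ℕ) : ((N+1).choose (k+1) : ℤ) = N.choose (k+1) + N.choose k := by
  rw [Nat.choose_succ_succ]; push_cast; ring

lemma Wf_pascal (j c : ℕ) : Wf (j+1) (c+1) = Wf (j+1) c + Wf j (c+2) := by
  unfold Wf
  have e1 : 2*(j+1)+(c+1) = (2*j+c+2)+1 := by ring
  have e2 : j+1+(c+1)+1 = (j+c+2)+1 := by ring
  have e3 : 2*(j+1)+c = 2*j+c+2 := by ring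
  have e4 : j+1+c+1 = j+c+2 := by ring
  have e5 : 2*j+(c+2) = 2*j+c+2 := by ring
  have e6 : j+(c+2)+1 = (j+c+2)+1 := by ring
  rw [e1, e2, e3, e4, e5, e6, show j+1 = j+1 from rfl, pa (2*j+c+2) j, pa (2*j+c+2) (j+c+2)]
  have : ((2*j+c+2).choose ((j+c+2)+1) : ℤ) = (2*j+c+2).choose ((j+c+2)+1) := rfl
  ring

lemma Wf_cat (j : ℕ) : Wf j 0 = (catalan j : ℤ) := by
  have h1 : (j + 1) * catalan j = (2*j).choose j := by
    rw [succ_mul_catalan_eq_centralBinom]; rfl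
  have h2 : (2*j).choose (j + 1) * (j + 1) = (2*j).choose j * j := by
    have := Nat.choose_succ_right_eq (2*j) j
    rwa [show 2*j - j = j by omega] at this
  have hj : (0:ℤ) < (j:ℤ) + 1 := by positivity
  have : ((j:ℤ)+1) * Wf j 0 = ((j:ℤ)+1) * (catalan j : ℤ) := by
    unfold Wf
    rw [show 2*j+0 = 2*j from rfl, show j+0+1 = j+1 from rfl]
    have h1' : ((j:ℤ) + 1) * (catalan j : ℤ) = ((2*j).choose j : ℤ) := by exact_mod_cast h1
    have h2' : ((2*j).choose (j+1) : ℤ) * ((j:ℤ) + 1) = ((2*j).choose j : ℤ) * j := by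
      exact_mod_cast h2
    nlinarith [h1', h2']
  exact mul_left_cancel₀ (ne_of_gt hj) this

lemma Wf_one (r : ℕ) : Wf r 1 = Wf (r+1) 0 := by
  unfold Wf
  have e1 : 2*(r+1)+0 = (2*r+1)+1 := by ring
  have e2 : r+1+0+1 = (r+1)+1 := by ring
  rw [e1, e2, pa (2*r+1) r, pa (2*r+1) (r+1)]
  ring

lemma conv_cat : ∀ r d : ℕ, (∑ k ∈ range (r+1), (catalan k : ℤ) * Wf (r-k) d) = Wf r (d+1) := by
  intro r
  induction r using Nat.strong_induction_on with
  | _ r ih =>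
    match r with
    | 0 => intro d; simp [Wf_zero]
    | Nat.succ s =>
      intro d
      induction d with
      | zero =>
        have : (∑ k ∈ range (s+1+1), (catalan k : ℤ) * Wf (s+1-k) 0)
            = ∑ k ∈ range (s+1+1), (catalan k : ℤ) * (catalan (s+1-k) : ℤ) := by
          refine Finset.sum_congr rfl fun k _ => by rw [Wf_cat]
        rw [this, Wf_one, Wf_cat]
        have hc := catalan_succ' (s+1)
        rw [Nat.sum_antidiagonal_eq_sum_range_succ_mk] at hc
        rw [show (((s:ℕ)+1)+1) = s+2 from rfl] at hc
        push_cast [hc]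
        ring
      | succ e ihd =>
        have split : (∑ k ∈ range (s+1+1), (catalan k : ℤ) * Wf (s+1-k) (e+1))
            = (∑ k ∈ range (s+1), (catalan k : ℤ) * Wf (s+1-k) (e+1))
              + (catalan (s+1) : ℤ) * Wf 0 (e+1) := by
          rw [Finset.sum_range_succ, Nat.sub_self]
        have hterm : ∀ k ∈ range (s+1),
            (catalan k : ℤ) * Wf (s+1-k) (e+1)
              = (catalan k : ℤ) * Wf (s+1-k) e + (catalan k : ℤ) * Wf (s-k) (e+2) := by
          intro k hk
          rw [mem_range] at hk
          have h1 : s+1-k = (s-k)+1 := by omega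
          rw [h1, Wf_pascal (s-k) e, mul_add]
        rw [split, Finset.sum_congr rfl hterm, Finset.sum_add_distrib]
        have A1 : (∑ k ∈ range (s+1), (catalan k : ℤ) * Wf (s+1-k) e)
              + (catalan (s+1) : ℤ) * Wf 0 (e+1)
            = Wf (s+1) (e+1) := by
          rw [Wf_zero, ← Wf_zero e, ← Nat.sub_self (s+1),
            ← Finset.sum_range_succ (fun k => (catalan k : ℤ) * Wf (s+1-k) e)]
          exact ihd
        have A2 : (∑ k ∈ range (s+1), (catalan k : ℤ) * Wf (s-k) (e+2)) = Wf s (e+3) :=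
          ih s (by omega) (e+2)
        rw [add_right_comm, A1, A2, ← Wf_pascal s (e+1)]

noncomputable def psW (c : ℕ) : PowerSeries ℤ := PowerSeries.mk (fun j => Wf j c)

lemma psW_mul (d : ℕ) : psW 0 * psW d = psW (d+1) := by
  ext r
  rw [PowerSeries.coeff_mul]
  simp only [psW, PowerSeries.coeff_mk]
  rw [Nat.sum_antidiagonal_eq_sum_range_succ_mk]
  rw [← conv_cat r d]
  exact Finset.sum_congr rfl fun k _ => by rw [Wf_cat]

lemma psW_pow (c : ℕ) : psW c = psW 0 ^ (c+1) := by
  induction c with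
  | zero => simp
  | succ e ih => rw [← psW_mul e, ih, pow_succ, mul_comm]; ring

lemma conv_W (r c : ℕ) :
    (∑ k ∈ range (r+1), Wf k c * Wf (r-k) c) = Wf r (2*c+1) := by
  have h : psW c * psW c = psW (2*c+1) := by
    rw [psW_pow c, psW_pow (2*c+1), ← pow_add]
    congr 1; ring
  have := congrArg (PowerSeries.coeff r) h
  rw [PowerSeries.coeff_mul, Nat.sum_antidiagonal_eq_sum_range_succ_mk] at this
  simpa [psW] using this

lemma diag_W : ∀ s t : ℕ, (∑ j ∈ range (s+1), Wf j (s - j + t)) = Wf s (t+1) := by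
  intro s
  induction s with
  | zero => intro t; simp [Wf_zero]
  | succ s ih =>
    intro t
    rw [Finset.sum_range_succ, Nat.sub_self]
    have : (∑ j ∈ range (s+1), Wf j (s+1-j+t)) = ∑ j ∈ range (s+1), Wf j (s-j+(t+1)) := by
      refine Finset.sum_congr rfl fun j hj => by
        rw [mem_range] at hj; congr 1; omega
    rw [this, ih (t+1), zero_add, add_comm, ← Wf_pascal s t]

lemma choose_symm_cast (n k k' : ℕ) (h : k + k' = n) : ((n.choose k : ℕ) : ℤ) = n.choose k' := by
  have : n.choose k = n.choose k' := by
    rw [← Nat.choose_symm (by omega : k' ≤ n)]; congr 1; omega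
  exact_mod_cast this

lemma telescope_W (m : ℕ) (hm : 3 ≤ m) :
    (∑ b ∈ Icc 1 (m-2), Wf (m-2-b) (2*b+3)) = ((2*m-1).choose (m-3) : ℤ) := by
  have himg : Icc 1 (m-2) = (range (m-2)).image (·+1) := by
    ext x; simp only [Finset.mem_image, mem_range, mem_Icc]
    constructor
    · rintro ⟨h1, h2⟩; exact ⟨x-1, by omega, by omega⟩
    · rintro ⟨i, hi, rfl⟩; omega
  rw [himg, Finset.sum_image (fun a _ b _ h => by omega)]
  have hterm : ∀ i ∈ range (m-2),
      Wf (m-2-(i+1)) (2*(i+1)+3)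
        = (((2*m-1).choose (m+i+2) : ℕ) : ℤ) - (((2*m-1).choose (m+(i+1)+2) : ℕ) : ℤ) := by
    intro i hi
    rw [mem_range] at hi
    unfold Wf
    have e1 : 2*(m-2-(i+1)) + (2*(i+1)+3) = 2*m-1 := by omega
    rw [e1]
    congr 1
    · exact choose_symm_cast _ _ _ (by omega)
    · exact congrArg _ (congrArg _ (by omega))
  rw [Finset.sum_congr rfl hterm,
    Finset.sum_range_sub' (fun i => (((2*m-1).choose (m+i+2) : ℕ) : ℤ)) (m-2)]
  have h2 : ((2*m-1).choose (m+(m-2)+2)) = 0 :=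
    Nat.choose_eq_zero_of_lt (by omega)
  rw [h2]
  rw [choose_symm_cast (2*m-1) (m+0+2) (m-3) (by omega)]
  ring

/-- suffix words: length j, positive entries, steps up by at most 1, head ≤ c (if nonempty). -/
def extW : ℕ → ℕ → Finset (List ℕ)
  | 0, _ => {[]}
  | (j+1), c => (Icc 1 c).biUnion fun s => (extW j (s+1)).image (s :: ·)

lemma mem_ext {j c : ℕ} {l : List ℕ} :
    l ∈ extW j c ↔ l.length = j ∧ (∀ x ∈ l, 0 < x) ∧
      l.Chain' (fun x y => y ≤ x + 1) ∧ (∀ h ∈ l.head?, h ≤ c) := by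
  induction j generalizing c l with
  | zero =>
    simp only [extW, Finset.mem_singleton]
    constructor
    · rintro rfl; simp [List.Chain']
    · rintro ⟨h, -⟩; exact List.length_eq_zero_iff.mp h
  | succ j ih =>
    simp only [extW, Finset.mem_biUnion, Finset.mem_image, mem_Icc]
    constructor
    · rintro ⟨s, ⟨hs1, hs2⟩, t, ht, rfl⟩
      obtain ⟨hlen, hpos, hch, hhd⟩ := ih.mp ht
      refine ⟨by simp [hlen], ?_, ?_, ?_⟩
      · rintro x hx
        rcases List.mem_cons.mp hx with rfl | hx
        · exact hs1
        · exact hpos x hx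
      · exact List.isChain_cons.mpr ⟨fun y hy => by
          have := hhd y hy; omega, hch⟩
      · intro h hh; simp at hh; omega
    · rintro ⟨hlen, hpos, hch, hhd⟩
      obtain ⟨s, t, rfl⟩ : ∃ s t, l = s :: t := by
        cases l with
        | nil => simp at hlen
        | cons s t => exact ⟨s, t, rfl⟩
      have hs1 : 0 < s := hpos s (by simp)
      have hs2 : s ≤ c := hhd s (by simp)
      obtain ⟨hy, hch'⟩ := List.isChain_cons.mp hch
      exact ⟨s, ⟨hs1, hs2⟩, t, ih.mpr ⟨by simpa using hlen,
        fun x hx => hpos x (List.mem_cons_of_mem _ hx), hch', hy⟩, rfl⟩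

def extCount (j c : ℕ) : ℕ := (extW j c).card

lemma extCount_succ (j c : ℕ) :
    extCount (j+1) c = ∑ s ∈ Icc 1 c, extCount j (s+1) := by
  unfold extCount
  rw [show extW (j+1) c = (Icc 1 c).biUnion fun s => (extW j (s+1)).image (s :: ·) from rfl]
  rw [Finset.card_biUnion]
  · exact Finset.sum_congr rfl fun s _ =>
      Finset.card_image_of_injective _ (fun a b h => by simpa using h)
  · intro s _ s' _ hss
    simp only [Finset.disjoint_left, Finset.mem_image]
    rintro l ⟨t, _, rfl⟩ ⟨t', _, h⟩
    exact hss (by simpa using (List.cons_eq_cons.mp h).1.symm)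

/-- head ≤ length for down-bounded chains ending at 1 -/
lemma head_le_length : ∀ r : List ℕ, r.Chain' (fun x y => x ≤ y + 1) →
    r.getLast? = some 1 → ∀ h ∈ r.head?, h ≤ r.length := by
  intro r
  induction r with
  | nil => simp
  | cons x rest ih =>
    intro hch hlast h hh
    simp only [List.head?_cons, Option.mem_def, Option.some.injEq] at hh
    subst hh
    cases rest with
    | nil =>
      simp only [List.getLast?_singleton, Option.some.injEq] at hlast
      simp [hlast]
    | cons y t =>
      obtain ⟨hxy, hch'⟩ := List.isChain_cons_cons.mp hch
      have hlast' : (y :: t).getLast? = some 1 := by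
        rwa [List.getLast?_cons_cons] at hlast
      have := ih hch' hlast' y (by simp)
      simp only [List.length_cons] at *
      omega

/-- reversed Catalan words of length k with head a -/
def rcw : ℕ → ℕ → Finset (List ℕ)
  | 0, _ => ∅
  | 1, a => if a = 1 then {[1]} else ∅
  | (k+2), a => if a = 0 then ∅ else
      (Icc (max 1 (a-1)) (k+1)).biUnion fun a' => (rcw (k+1) a').image (a :: ·)

lemma mem_rcw : ∀ (k a : ℕ) (r : List ℕ),
    r ∈ rcw k a ↔ r.length = k ∧ r.head? = some a ∧ (∀ x ∈ r, 0 < x) ∧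
      r.Chain' (fun x y => x ≤ y + 1) ∧ r.getLast? = some 1
  | 0, a, r => by
    simp only [rcw, Finset.notMem_empty, false_iff]
    rintro ⟨hlen, hhd, -⟩
    rw [List.length_eq_zero_iff.mp hlen] at hhd; simp at hhd
  | 1, a, r => by
    constructor
    · intro hr
      simp only [rcw] at hr
      split at hr
      · next h =>
        subst h
        simp only [Finset.mem_singleton] at hr
        subst hr
        exact ⟨rfl, rfl, by simp, by simp [List.Chain'], rfl⟩
      · simp at hr
    · rintro ⟨hlen, hhd, hpos, -, hlast⟩
      obtain ⟨x, rfl⟩ : ∃ x, r = [x] := by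
        cases r with
        | nil => simp at hlen
        | cons x t =>
          cases t with
          | nil => exact ⟨x, rfl⟩
          | cons y s => simp at hlen
      simp only [List.head?_cons, Option.some.injEq] at hhd
      simp only [List.getLast?_singleton, Option.some.injEq] at hlast
      subst hlast
      simp [rcw, hhd.symm]
  | (k+2), a, r => by
    constructor
    · intro hr
      simp only [rcw] at hr
      split at hr
      · simp at hr
      · next ha =>
        simp only [Finset.mem_biUnion, Finset.mem_image, mem_Icc] at hr
        obtain ⟨a', ⟨ha1, ha2⟩, t, ht, rfl⟩ := hr
        obtain ⟨hlen, hhd, hpos, hch, hlast⟩ := (mem_rcw (k+1) a' t).mp ht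
        obtain ⟨y, s, rfl⟩ : ∃ y s, t = y :: s := by
          cases t with
          | nil => simp at hlen
          | cons y s => exact ⟨y, s, rfl⟩
        simp only [List.head?_cons, Option.some.injEq] at hhd
        subst hhd
        refine ⟨by simpa using hlen, rfl, ?_, ?_, ?_⟩
        · intro x hx
          rcases List.mem_cons.mp hx with rfl | hx
          · omega
          · exact hpos x hx
        · exact List.isChain_cons_cons.mpr ⟨by omega, hch⟩
        · rwa [List.getLast?_cons_cons]
    · rintro ⟨hlen, hhd, hpos, hch, hlast⟩
      obtain ⟨x, y, s, rfl⟩ : ∃ x y s, r = x :: y :: s := by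
        cases r with
        | nil => simp at hlen
        | cons x t =>
          cases t with
          | nil => simp at hlen
          | cons y s => exact ⟨x, y, s, rfl⟩
      simp only [List.head?_cons, Option.some.injEq] at hhd
      subst hhd
      obtain ⟨hxy, hch'⟩ := List.isChain_cons_cons.mp hch
      have hlast' : (y :: s).getLast? = some 1 := by
        rwa [List.getLast?_cons_cons] at hlast
      have hylen : y ≤ k + 1 := by
        have := head_le_length (y :: s) hch' hlast' y (by simp)
        simp only [List.length_cons] at *
        omega
      have hy : 0 < y := hpos y (by simp [List.mem_cons])
      have hx0 : x ≠ 0 := by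
        have := hpos x (by simp); omega
      simp only [rcw, if_neg hx0, Finset.mem_biUnion, Finset.mem_image, mem_Icc]
      refine ⟨y, ⟨by omega, hylen⟩, y :: s, (mem_rcw (k+1) y _).mpr
        ⟨by simpa using hlen, rfl, fun x hx => hpos x (List.mem_cons_of_mem _ hx),
          hch', hlast'⟩, rfl⟩

def ccount (k a : ℕ) : ℕ := (rcw k a).card

lemma ccount_succ (k a : ℕ) (ha : 1 ≤ a) :
    ccount (k+2) a = ∑ a' ∈ Icc (max 1 (a-1)) (k+1), ccount (k+1) a' := by
  unfold ccount
  rw [show rcw (k+2) a = if a = 0 then ∅ else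
      (Icc (max 1 (a-1)) (k+1)).biUnion fun a' => (rcw (k+1) a').image (a :: ·) from rfl,
    if_neg (by omega)]
  rw [Finset.card_biUnion]
  · exact Finset.sum_congr rfl fun s _ =>
      Finset.card_image_of_injective _ (fun u v h => by simpa using h)
  · intro s hs s' hs' hss
    simp only [Finset.disjoint_left, Finset.mem_image]
    rintro l ⟨t, ht, rfl⟩ ⟨t', ht', h⟩
    have e1 := ((mem_rcw _ _ _).mp ht).2.1
    have e2 := ((mem_rcw _ _ _).mp ht').2.1
    have : t = t' := (List.cons_eq_cons.mp h).2.symm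
    subst this
    rw [e1] at e2
    exact hss (by simpa using e2)

lemma sum_Icc_Wf (j : ℕ) : ∀ c : ℕ, 1 ≤ c → (∑ s ∈ Icc 1 c, Wf j s) = Wf (j+1) (c-1) := by
  intro c
  induction c with
  | zero => omega
  | succ c ih =>
    intro _
    rcases Nat.eq_zero_or_pos c with rfl | hc
    · simpa using (Wf_one j)
    · rw [Finset.sum_Icc_succ_top (by omega : 1 ≤ c+1), ih hc]
      have e : c + 1 - 1 = (c-1) + 1 := by omega
      rw [e, Wf_pascal j (c-1), show c-1+2 = c+1 by omega]

lemma extCount_closed : ∀ j c : ℕ, 1 ≤ c → (extCount j c : ℤ) = Wf j (c-1) := by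
  intro j
  induction j with
  | zero => intro c hc; simp [extCount, extW, Wf_zero]
  | succ j ih =>
    intro c hc
    rw [extCount_succ]
    push_cast
    have h1 : (∑ s ∈ Icc 1 c, (extCount j (s+1) : ℤ)) = ∑ s ∈ Icc 1 c, Wf j s :=
      Finset.sum_congr rfl (fun s hs => by simpa using ih (s+1) (by omega))
    rw [h1]
    exact sum_Icc_Wf j c hc

lemma ccount_closed : ∀ k a : ℕ, 1 ≤ a → a ≤ k → (ccount k a : ℤ) = Wf (k-a) (a-1) := by
  intro k
  match k with
  | 0 => omega
  | 1 => intro a h1 h2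
         have : a = 1 := by omega
         subst this
         simp [ccount, rcw, Wf_zero]
  | (k+2) =>
    intro a h1 h2
    rw [ccount_succ k a h1]
    push_cast
    set c0 := max 1 (a-1) with hc0
    have hc0le : c0 ≤ k+1 := by omega
    have himg : Icc c0 (k+1) = (range (k+1-c0+1)).image (fun j => k+1-j) := by
      ext x
      simp only [Finset.mem_image, mem_range, mem_Icc]
      constructor
      · rintro ⟨hx1, hx2⟩; exact ⟨k+1-x, by omega, by omega⟩
      · rintro ⟨i, hi, rfl⟩; omega
    rw [himg, Finset.sum_image (fun u hu v hv h => by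
      rw [Finset.mem_coe, mem_range] at hu hv; omega)]
    have hterm : ∀ i ∈ range (k+1-c0+1),
        (ccount (k+1) (k+1-i) : ℤ) = Wf i ((k+1-c0) - i + (c0-1)) := by
      intro i hi
      rw [mem_range] at hi
      rw [ccount_closed (k+1) (k+1-i) (by omega) (by omega)]
      congr 1 <;> omega
    rw [Finset.sum_congr rfl hterm, diag_W (k+1-c0) (c0-1)]
    rcases Nat.lt_or_ge a 2 with ha | ha
    · rw [show k+1-c0 = k by omega, show c0-1+1 = 1 by omega,
        show k+2-a = k+1 by omega, show a-1 = 0 by omega]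
      exact Wf_one k
    · congr 1 <;> omega

lemma ccount_zero_of_gt (k a : ℕ) (h : k < a) : ccount k a = 0 := by
  unfold ccount
  rw [Finset.card_eq_zero, Finset.eq_empty_iff_forall_notMem]
  intro r hr
  obtain ⟨hlen, hhd, -, hch, hlast⟩ := (mem_rcw k a r).mp hr
  have := head_le_length r hch hlast a hhd
  omega

/-- suffix pieces with head exactly b+1 -/
def vw : ℕ → ℕ → Finset (List ℕ)
  | 0, _ => ∅
  | (j+1), b => (extW j (b+2)).image ((b+1) :: ·)

lemma mem_vw {j b : ℕ} {l : List ℕ} :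
    l ∈ vw (j+1) b ↔ l.length = j+1 ∧ l.head? = some (b+1) ∧ (∀ x ∈ l, 0 < x) ∧
      l.Chain' (fun x y => y ≤ x + 1) := by
  simp only [vw, Finset.mem_image]
  constructor
  · rintro ⟨t, ht, rfl⟩
    obtain ⟨hlen, hpos, hch, hhd⟩ := mem_ext.mp ht
    refine ⟨by simp [hlen], rfl, ?_, ?_⟩
    · intro x hx
      rcases List.mem_cons.mp hx with rfl | hx
      · omega
      · exact hpos x hx
    · exact List.isChain_cons.mpr ⟨fun y hy => by have := hhd y hy; omega, hch⟩
  · rintro ⟨hlen, hhd, hpos, hch⟩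
    obtain ⟨x, t, rfl⟩ : ∃ x t, l = x :: t := by
      cases l with
      | nil => simp at hlen
      | cons x t => exact ⟨x, t, rfl⟩
    simp only [List.head?_cons, Option.some.injEq] at hhd
    subst hhd
    obtain ⟨hy, hch'⟩ := List.isChain_cons.mp hch
    exact ⟨t, mem_ext.mpr ⟨by simpa using hlen,
      fun x hx => hpos x (List.mem_cons_of_mem _ hx), hch', fun h hh => by
        have := hy h hh; omega⟩, rfl⟩

lemma vw_count (j b : ℕ) : ((vw (j+1) b).card : ℤ) = Wf j (b+1) := by
  rw [show vw (j+1) b = (extW j (b+2)).image ((b+1) :: ·) from rfl,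
    Finset.card_image_of_injective _ (fun u v h => by simpa using h)]
  rw [show (extW j (b+2)).card = extCount j (b+2) from rfl,
    extCount_closed j (b+2) (by omega)]
  congr 1

lemma isCatalan_iff (w : List ℕ) :
    IsCatalanWord w ↔ (∀ x ∈ w, 0 < x) ∧ (∀ h ∈ w.head?, h = 1) ∧
      w.Chain' (fun x y => y ≤ x + 1) := by
  unfold IsCatalanWord
  constructor
  · rintro ⟨h1, h2, h3⟩
    refine ⟨h1, ?_, ?_⟩
    · intro h hh
      cases w with
      | nil => simp at hh
      | cons x t =>
        simp only [List.head?_cons, Option.mem_def, Option.some.injEq] at hh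
        subst hh
        simpa using h2 (by simp)
    · rw [List.Chain', List.isChain_iff_getElem]
      intro i hi
      have := h3 i (by omega)
      rwa [List.getD_eq_getElem _ _ (by omega), List.getD_eq_getElem _ _ (by omega)] at this
  · rintro ⟨h1, h2, h3⟩
    refine ⟨h1, ?_, ?_⟩
    · intro hl
      cases w with
      | nil => simp at hl
      | cons x t => simpa using h2 x (by simp)
    · intro i hi
      rw [List.Chain', List.isChain_iff_getElem] at h3
      have := h3 i (by omega)
      rwa [List.getD_eq_getElem _ _ (by omega), List.getD_eq_getElem _ _ (by omega)]

def Tfin (m ℓ : ℕ) : Finset (List ℕ × ℕ × ℕ × ℕ) :=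
  (Icc 1 (m-1)).biUnion fun k =>
    (Icc 1 (m-2)).biUnion fun b =>
      (Icc (b+1) k).biUnion fun a =>
        ((rcw k a) ×ˢ (vw (m-k) b)).image
          (fun rv => (rv.1.reverse ++ (List.replicate ℓ b ++ rv.2), k-1, a, b))

lemma mem_Tfin (n ℓ : ℕ) (hn : 4 ≤ n) (hl1 : 1 ≤ ℓ) (hl2 : ℓ ≤ n - 3)
    (p : List ℕ × ℕ × ℕ × ℕ) :
    p ∈ Tfin (n-ℓ) ℓ ↔
      (IsCatalanWord p.1 ∧ p.1.length = n ∧ 1 ≤ p.2.2.2 ∧ p.2.2.2 < p.2.2.1 ∧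
        (p.1.drop p.2.1).take (ℓ+2)
          = p.2.2.1 :: (List.replicate ℓ p.2.2.2 ++ [p.2.2.2+1])) := by
  set m := n - ℓ with hmdef
  have hm3 : 3 ≤ m := by omega
  obtain ⟨w, i, a, b⟩ := p
  simp only [Tfin, Finset.mem_biUnion, Finset.mem_image, Finset.mem_product, mem_Icc,
    Prod.exists]
  constructor
  · rintro ⟨k, ⟨hk1, hk2⟩, b', ⟨hb1, hb2⟩, a', ⟨ha1, ha2⟩, r, v, ⟨hr, hv⟩, heq⟩
    simp only [Prod.mk.injEq] at heq
    obtain ⟨heqw, heqi, heqa, heqb⟩ := heq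
    subst heqa heqb
    rename' a' => a, b' => b
    obtain ⟨hrlen, hrhd, hrpos, hrch, hrlast⟩ := (mem_rcw k a r).mp hr
    have hmk : m - k = (m-k-1)+1 := by omega
    rw [hmk] at hv
    obtain ⟨hvlen, hvhd, hvpos, hvch⟩ := mem_vw.mp hv
    -- basic facts about u = r.reverse
    have hulen : r.reverse.length = k := by simpa using hrlen
    have hune : r.reverse ≠ [] := by
      intro h; rw [h] at hulen; simp at hulen; omega
    have huhd : r.reverse.head? = some 1 := by rw [List.head?_reverse]; exact hrlast
    have hulast : r.reverse.getLast? = some a := by rw [List.getLast?_reverse]; exact hrhd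
    have huch : r.reverse.Chain' (fun x y => y ≤ x + 1) :=
      List.isChain_reverse.mpr (by simpa [flip, List.Chain'] using hrch)
    -- v = (b+1) :: v'
    obtain ⟨v', rfl⟩ : ∃ v', v = (b+1) :: v' := by
      cases v with
      | nil => simp at hvhd
      | cons x t =>
        simp only [List.head?_cons, Option.some.injEq] at hvhd
        exact ⟨t, by rw [hvhd]⟩
    -- r = a :: t
    obtain ⟨t, rfl⟩ : ∃ t, r = a :: t := by
      cases r with
      | nil => simp at hrhd
      | cons x s =>
        simp only [List.head?_cons, Option.some.injEq] at hrhd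
        exact ⟨s, by rw [hrhd]⟩
    subst heqw heqi
    have hrepch : (List.replicate ℓ b).Chain' (fun x y => y ≤ x + 1) :=
      List.isChain_replicate_of_rel ℓ (by omega)
    refine ⟨?_, ?_, hb1, by omega, ?_⟩
    · rw [isCatalan_iff]
      refine ⟨?_, ?_, ?_⟩
      · intro x hx
        rcases List.mem_append.mp hx with hx | hx
        · exact hrpos x (List.mem_reverse.mp hx)
        · rcases List.mem_append.mp hx with hx | hx
          · have := List.eq_of_mem_replicate hx; omega
          · exact hvpos x hx
      · intro h hh
        rw [List.head?_append_of_ne_nil _ hune, huhd] at hh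
        simpa using hh.symm
      · rw [List.Chain', List.isChain_append]
        refine ⟨huch, ?_, ?_⟩
        · rw [List.isChain_append]
          refine ⟨hrepch, hvch, ?_⟩
          intro x hx y hy
          rw [List.getLast?_replicate, if_neg (by omega)] at hx
          simp only [Option.mem_def, Option.some.injEq] at hx
          simp only [List.head?_cons, Option.mem_def, Option.some.injEq] at hy
          omega
        · intro x hx y hy
          rw [hulast] at hx
          simp only [Option.mem_def, Option.some.injEq] at hx
          rw [List.head?_append_of_ne_nil _ (by simp; omega), List.head?_replicate,
            if_neg (by omega)] at hy
          simp only [Option.mem_def, Option.some.injEq] at hy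
          omega
    · have h1 : t.length + 1 = k := by simpa using hrlen
      have h2 : v'.length + 1 = m - k - 1 + 1 := by simpa using hvlen
      simp only [List.length_append, List.length_reverse, List.length_replicate,
        List.length_cons]
      omega
    · -- pattern
      have hsp : (a :: t).reverse ++ (List.replicate ℓ b ++ (b+1) :: v')
          = t.reverse ++ ([a] ++ ((List.replicate ℓ b ++ [b+1]) ++ v')) := by
        simp
      rw [hsp]
      have hlt : t.reverse.length = k - 1 := by
        simp only [List.length_reverse]
        simp only [List.length_cons] at hrlen; omega
      rw [show k - 1 = t.reverse.length from hlt.symm, List.drop_left]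
      rw [show ([a] ++ ((List.replicate ℓ b ++ [b+1]) ++ v'))
          = a :: ((List.replicate ℓ b ++ [b+1]) ++ v') from rfl]
      rw [List.take_cons]
      rw [List.take_left' (by simp)]
      simp
  · rintro ⟨hcat, hlen, hb1, hba, hpat⟩
    obtain ⟨hpos, hhd1, hch⟩ := (isCatalan_iff w).mp hcat
    -- length bound
    have hdlen : ((w.drop i).take (ℓ+2)).length = ℓ+2 := by rw [hpat]; simp
    have hile : i + (ℓ+2) ≤ n := by
      rw [List.length_take, List.length_drop, hlen] at hdlen
      omega
    -- decomposition of drop i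
    have hsplit : w.drop i = (a :: (List.replicate ℓ b ++ [b+1])) ++ w.drop (i+(ℓ+2)) := by
      conv_lhs => rw [← List.take_append_drop (ℓ+2) (w.drop i)]
      rw [hpat, List.drop_drop]
    have hw : w = w.take i ++ ((a :: (List.replicate ℓ b ++ [b+1])) ++ w.drop (i+(ℓ+2))) := by
      conv_lhs => rw [← List.take_append_drop i w]
      rw [hsplit]
    have hwu : w = (w.take i ++ [a])
        ++ (List.replicate ℓ b ++ ((b+1) :: w.drop (i+(ℓ+2)))) := by
      conv_lhs => rw [hw]
      simp
    have hulen : (w.take i ++ [a]).length = i + 1 := by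
      simp [List.length_take]; omega
    have hvlen : ((b+1) :: w.drop (i+(ℓ+2))).length = n - (i+ℓ+1) := by
      simp [List.length_drop, hlen]; omega
    -- chain facts
    have hch' : ((w.take i ++ [a])
        ++ (List.replicate ℓ b ++ ((b+1) :: w.drop (i+(ℓ+2))))).Chain'
          (fun x y => y ≤ x + 1) := by
      rw [← hwu]; exact hch
    obtain ⟨hchu, hchrest, hjun1⟩ := List.isChain_append.mp hch'
    obtain ⟨hchrep, hchv, hjun2⟩ := List.isChain_append.mp hchrest
    -- positivity restricted
    have hposu : ∀ x ∈ (w.take i ++ [a]), 0 < x := fun x hx =>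
      hpos x (by rw [hwu]; simp at hx ⊢; tauto)
    have hposv : ∀ x ∈ ((b+1) :: w.drop (i+(ℓ+2))), 0 < x := fun x hx =>
      hpos x (by rw [hwu]; simp at hx ⊢; tauto)
    have hune : (w.take i ++ [a]) ≠ [] := by simp
    have hwhd : w.head? = some 1 := by
      cases w with
      | nil => rw [List.length_nil] at hlen; omega
      | cons x t => exact congrArg some (hhd1 x rfl)
    have huhd : (w.take i ++ [a]).head? = some 1 := by
      rw [hwu, List.head?_append_of_ne_nil _ hune] at hwhd
      exact hwhd
    have hulast : (w.take i ++ [a]).getLast? = some a := List.getLast?_concat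
    have hrmem : (w.take i ++ [a]).reverse ∈ rcw (i+1) a := by
      rw [mem_rcw]
      refine ⟨by simpa using hulen, by rw [List.head?_reverse]; exact hulast,
        fun x hx => hposu x (List.mem_reverse.mp hx), ?_,
        by rw [List.getLast?_reverse]; exact huhd⟩
      exact List.isChain_reverse.mpr (by simpa [flip] using hchu)
    have ha1 : 0 < a := hposu a (by simp)
    have hak : a ≤ i + 1 := by
      have := head_le_length (w.take i ++ [a]).reverse
        (List.isChain_reverse.mpr (by simpa [flip] using hchu))
        (by rw [List.getLast?_reverse]; exact huhd) a
        (by rw [List.head?_reverse]; exact hulast)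
      rwa [List.length_reverse, hulen] at this
    have hvmem : ((b+1) :: w.drop (i+(ℓ+2))) ∈ vw (m-(i+1)) b := by
      have hmk : m - (i+1) = (m-(i+1)-1)+1 := by omega
      rw [hmk, mem_vw]
      exact ⟨by rw [hvlen]; omega, rfl, hposv, hchv⟩
    refine ⟨i+1, ⟨by omega, by omega⟩, b, ⟨hb1, by omega⟩, a, ⟨by omega, hak⟩,
      (w.take i ++ [a]).reverse, ((b+1) :: w.drop (i+(ℓ+2))), ⟨hrmem, hvmem⟩, ?_⟩
    simp only [List.reverse_reverse]
    rw [← hwu]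
    simp

lemma sum_ccount (k b : ℕ) (hb : 1 ≤ b) (hbk : b+1 ≤ k) :
    (∑ a ∈ Icc (b+1) k, (ccount k a : ℤ)) = Wf (k-b-1) (b+1) := by
  have himg : Icc (b+1) k = (range (k-b)).image (fun j => k - j) := by
    ext x
    simp only [Finset.mem_image, mem_range, mem_Icc]
    constructor
    · rintro ⟨h1, h2⟩; exact ⟨k-x, by omega, by omega⟩
    · rintro ⟨j, hj, rfl⟩; omega
  rw [himg, Finset.sum_image (fun u hu v hv h => by
    rw [Finset.mem_coe, mem_range] at hu hv; omega)]
  have hterm : ∀ j ∈ range (k-b), (ccount k (k-j) : ℤ) = Wf j ((k-b-1) - j + b) := by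
    intro j hj
    rw [mem_range] at hj
    rw [ccount_closed k (k-j) (by omega) (by omega)]
    congr 1 <;> omega
  rw [Finset.sum_congr rfl hterm, show range (k-b) = range ((k-b-1)+1) from by congr 1; omega,
    diag_W (k-b-1) b]

lemma Tfin_card (m ℓ : ℕ) (hm : 3 ≤ m) :
    (((Tfin m ℓ).card : ℕ) : ℤ) = ((2*m-1).choose (m-3) : ℤ) := by
  have hmem : ∀ k b a (x : List ℕ × ℕ × ℕ × ℕ),
      x ∈ ((rcw k a) ×ˢ (vw (m-k) b)).image
        (fun rv => (rv.1.reverse ++ (List.replicate ℓ b ++ rv.2), k-1, a, b)) →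
      x.2.1 = k-1 ∧ x.2.2.1 = a ∧ x.2.2.2 = b := by
    intro k b a x hx
    simp only [Finset.mem_image] at hx
    obtain ⟨rv, -, rfl⟩ := hx
    exact ⟨rfl, rfl, rfl⟩
  have hstep : (Tfin m ℓ).card
      = ∑ k ∈ Icc 1 (m-1), ∑ b ∈ Icc 1 (m-2), ∑ a ∈ Icc (b+1) k,
          (rcw k a).card * (vw (m-k) b).card := by
    unfold Tfin
    rw [Finset.card_biUnion ?d1]
    case d1 =>
      intro k hk k' hk' hkk
      rw [Finset.mem_coe, mem_Icc] at hk hk'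
      simp only [Function.onFun, Finset.disjoint_left]
      intro x hx hx'
      simp only [Finset.mem_biUnion] at hx hx'
      obtain ⟨b, -, a, -, hx⟩ := hx
      obtain ⟨b', -, a', -, hx'⟩ := hx'
      have e1 := (hmem _ _ _ _ hx).1
      have e2 := (hmem _ _ _ _ hx').1
      rw [e1] at e2
      exact hkk (by omega)
    refine Finset.sum_congr rfl fun k hk => ?_
    rw [Finset.card_biUnion ?d2]
    case d2 =>
      intro b hb b' hb' hbb
      simp only [Function.onFun, Finset.disjoint_left]
      intro x hx hx'
      simp only [Finset.mem_biUnion] at hx hx'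
      obtain ⟨a, -, hx⟩ := hx
      obtain ⟨a', -, hx'⟩ := hx'
      have e1 := (hmem _ _ _ _ hx).2.2
      have e2 := (hmem _ _ _ _ hx').2.2
      rw [e1] at e2
      exact hbb e2
    refine Finset.sum_congr rfl fun b hb => ?_
    rw [Finset.card_biUnion ?d3]
    case d3 =>
      intro a ha a' ha' haa
      simp only [Function.onFun, Finset.disjoint_left]
      intro x hx hx'
      have e1 := (hmem _ _ _ _ hx).2.1
      have e2 := (hmem _ _ _ _ hx').2.1
      rw [e1] at e2
      exact haa e2
    refine Finset.sum_congr rfl fun a ha => ?_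
    rw [Finset.card_image_of_injOn, Finset.card_product]
    rintro ⟨r, v⟩ hrv ⟨r', v'⟩ hrv' heq
    simp only [Finset.mem_coe, Finset.mem_product] at hrv hrv'
    simp only [Prod.mk.injEq] at heq
    obtain ⟨h1, -⟩ := heq
    have hl1 : r.length = k := ((mem_rcw _ _ _).mp hrv.1).1
    have hl2 : r'.length = k := ((mem_rcw _ _ _).mp hrv'.1).1
    obtain ⟨e1, e2⟩ := List.append_inj h1 (by simp [hl1, hl2])
    have : r = r' := by
      have := congrArg List.reverse e1
      simpa using this
    have : v = v' := List.append_cancel_left e2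
    simp_all
  rw [hstep]
  push_cast
  have hinner : ∀ k ∈ Icc 1 (m-1), ∀ b ∈ Icc 1 (m-2),
      (∑ a ∈ Icc (b+1) k, ((rcw k a).card : ℤ) * ((vw (m-k) b).card : ℤ))
        = (if b+1 ≤ k then Wf (k-b-1) (b+1) * Wf (m-k-1) (b+1) else 0) := by
    intro k hk b hb
    rw [mem_Icc] at hk hb
    rw [← Finset.sum_mul]
    split
    · next h =>
      rw [show (∑ a ∈ Icc (b+1) k, ((rcw k a).card : ℤ)) = Wf (k-b-1) (b+1) from
        sum_ccount k b hb.1 h]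
      congr 1
      rw [show m-k = (m-k-1)+1 by omega]
      exact vw_count (m-k-1) b
    · next h =>
      rw [Icc_eq_empty (by omega), Finset.sum_empty, zero_mul]
  rw [Finset.sum_congr rfl (fun k hk => Finset.sum_congr rfl (fun b hb => hinner k hk b hb))]
  rw [Finset.sum_comm]
  have houter : ∀ b ∈ Icc 1 (m-2),
      (∑ k ∈ Icc 1 (m-1), if b+1 ≤ k then Wf (k-b-1) (b+1) * Wf (m-k-1) (b+1) else 0)
        = Wf (m-2-b) (2*b+3) := by
    intro b hb
    rw [mem_Icc] at hb
    rw [← Finset.sum_filter]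
    have hfil : (Icc 1 (m-1)).filter (fun k => b+1 ≤ k) = Icc (b+1) (m-1) := by
      ext x
      simp only [Finset.mem_filter, mem_Icc]
      omega
    rw [hfil]
    have himg : Icc (b+1) (m-1) = (range (m-1-b)).image (fun s => b+1+s) := by
      ext x
      simp only [Finset.mem_image, mem_range, mem_Icc]
      constructor
      · rintro ⟨h1, h2⟩; exact ⟨x-b-1, by omega, by omega⟩
      · rintro ⟨s, hs, rfl⟩; omega
    rw [himg, Finset.sum_image (fun u hu v hv h => by omega)]
    have hterm : ∀ s ∈ range (m-1-b),
        Wf (b+1+s-b-1) (b+1) * Wf (m-(b+1+s)-1) (b+1)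
          = Wf s (b+1) * Wf ((m-b-2) - s) (b+1) := by
      intro s hs
      rw [mem_range] at hs
      congr 2 <;> omega
    rw [Finset.sum_congr rfl hterm, show m-1-b = (m-b-2)+1 by omega,
      conv_W (m-b-2) (b+1)]
    congr 1 <;> omega
  rw [Finset.sum_congr rfl houter]
  exact telescope_W m hm

/-- Total number of ℓ-valleys (occurrences of a string a, b^ℓ, b+1 with a > b ≥ 1,
at some position i) over all Catalan words of length n. -/
theorem total_ell_valleys (n ℓ : ℕ) (hn : 4 ≤ n) (hl1 : 1 ≤ ℓ) (hl2 : ℓ ≤ n - 3) :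
    Nat.card {p : List ℕ × ℕ × ℕ × ℕ //
        IsCatalanWord p.1 ∧ p.1.length = n ∧
        1 ≤ p.2.2.2 ∧ p.2.2.2 < p.2.2.1 ∧
        (p.1.drop p.2.1).take (ℓ + 2) =
          p.2.2.1 :: (List.replicate ℓ p.2.2.2 ++ [p.2.2.2 + 1])} =
      (2 * n - 2 * ℓ - 1).choose (n - ℓ - 3) := by
  have hset : {p : List ℕ × ℕ × ℕ × ℕ |
      IsCatalanWord p.1 ∧ p.1.length = n ∧
        1 ≤ p.2.2.2 ∧ p.2.2.2 < p.2.2.1 ∧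
        (p.1.drop p.2.1).take (ℓ + 2) =
          p.2.2.1 :: (List.replicate ℓ p.2.2.2 ++ [p.2.2.2 + 1])}
      = ↑(Tfin (n-ℓ) ℓ) := by
    ext p
    rw [Finset.mem_coe, mem_Tfin n ℓ hn hl1 hl2 p]
    rfl
  have h1 : Nat.card {p : List ℕ × ℕ × ℕ × ℕ //
      IsCatalanWord p.1 ∧ p.1.length = n ∧
        1 ≤ p.2.2.2 ∧ p.2.2.2 < p.2.2.1 ∧
        (p.1.drop p.2.1).take (ℓ + 2) =
          p.2.2.1 :: (List.replicate ℓ p.2.2.2 ++ [p.2.2.2 + 1])}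
      = (Tfin (n-ℓ) ℓ).card := by
    rw [← Set.ncard_coe_finset, ← hset]
    exact Nat.card_coe_set_eq _
  rw [h1]
  have hm : 3 ≤ n - ℓ := by omega
  have h2 := Tfin_card (n-ℓ) ℓ hm
  have h3 : 2*(n-ℓ)-1 = 2*n-2*ℓ-1 := by omega
  rw [h3] at h2
  exact_mod_cast h2
end

section
/- For n ≥ 3 and 1 ≤ ℓ ≤ n-2, the total number of symmetric ℓ-peaks over all Catalan words of length n equals C(2n-2ℓ-2, n-ℓ-2). -/
namespace SymPeaks

def R (x y : ℕ) : Prop := 0 < y ∧ y ≤ x + 1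

theorem chain_cons' {α : Type*} {R : α → α → Prop} {a b : α} {l : List α} :
    List.Chain R a (b :: l) ↔ R a b ∧ List.Chain R b l :=
  List.isChain_cons_cons

theorem chain_singleton' {α : Type*} {R : α → α → Prop} {a b : α} :
    List.Chain R a [b] ↔ R a b :=
  List.isChain_pair

theorem chain_split' {α : Type*} {R : α → α → Prop} {a c : α} {l₁ l₂ : List α} :
    List.Chain R a (l₁ ++ c :: l₂) ↔ List.Chain R a (l₁ ++ [c]) ∧ List.Chain R c l₂ :=
  List.isChain_cons_split

@[simp] theorem chain_nil' {α : Type*} {R : α → α → Prop} {a : α} : List.Chain R a [] :=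
  List.IsChain.singleton a

theorem chain_iff_get' {α : Type*} {R : α → α → Prop} {a : α} {l : List α} :
    List.Chain R a l ↔
      (∀ h : 0 < List.length l, R a (List.get l ⟨0, h⟩)) ∧
        ∀ (i : ℕ) (h : i < List.length l - 1),
          R (List.get l ⟨i, by omega⟩) (List.get l ⟨i + 1, by omega⟩) := by
  simp only [List.Chain, List.isChain_iff_getElem, List.get_eq_getElem, List.length_cons]
  constructor
  · intro h
    exact ⟨fun h0 => by simpa using h 0 (by omega), fun i hi => h (i + 1) (by omega)⟩
  · rintro ⟨h0, h1⟩ i hi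
    cases i with
    | zero => simpa using h0 (by omega)
    | succ j => simpa using h1 j (by omega)

abbrev CWlen (n : ℕ) := {w : List ℕ // List.Chain R 0 w ∧ w.length = n}

theorem chain_pos {a : ℕ} {l : List ℕ} (h : List.Chain R a l) : ∀ y ∈ l, 0 < y := by
  induction l generalizing a with
  | nil => simp
  | cons b t ih =>
    rw [chain_cons'] at h
    intro y hy
    rcases List.mem_cons.1 hy with rfl | hy
    · exact h.1.1
    · exact ih h.2 y hy

theorem chain_le {l : List ℕ} : ∀ {a : ℕ}, List.Chain R a l → ∀ i (h : i < l.length), l[i] ≤ a + i + 1 := by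
  induction l with
  | nil => intro a _ i h; simp at h
  | cons b t ih =>
    intro a h i hi
    rw [chain_cons'] at h
    cases i with
    | zero => simpa using h.1.2
    | succ j =>
      have := ih h.2 j (by simpa using hi)
      simp only [List.getElem_cons_succ]
      have hb := h.1.2
      omega

theorem isCatalanWord_iff (w : List ℕ) : IsCatalanWord w ↔ List.Chain R 0 w := by
  rw [chain_iff_get']
  simp only [List.get_eq_getElem]
  constructor
  · rintro ⟨hpos, hhead, hstep⟩
    refine ⟨fun h => ?_, fun i hi => ?_⟩
    · have h1 : w.getD 0 0 = 1 := hhead h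
      rw [List.getD_eq_getElem _ _ h] at h1
      exact ⟨by omega, by omega⟩
    · have h1 : i + 1 < w.length := by omega
      have := hstep i h1
      rw [List.getD_eq_getElem _ _ h1, List.getD_eq_getElem _ _ (by omega)] at this
      exact ⟨hpos _ (List.getElem_mem _), this⟩
  · rintro ⟨h0, hstep⟩
    refine ⟨fun x hx => ?_, fun h => ?_, fun i hi => ?_⟩
    · obtain ⟨j, hj, rfl⟩ := List.getElem_of_mem hx
      rcases Nat.eq_zero_or_pos j with rfl | hjpos
      · exact (h0 (by omega)).1
      · obtain ⟨k, rfl⟩ := Nat.exists_eq_succ_of_ne_zero (by omega : j ≠ 0)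
        exact (hstep k (by omega)).1
    · have h1 := (h0 h).1
      have h2 := (h0 h).2
      rw [List.getD_eq_getElem _ _ h]
      omega
    · have := hstep i (by omega)
      rw [List.getD_eq_getElem _ _ hi, List.getD_eq_getElem _ _ (by omega)]
      exact this.2

theorem entry_le {w : List ℕ} (h : List.Chain R 0 w) (i : ℕ) (hi : i < w.length) :
    w[i] ≤ i + 1 := by simpa using chain_le h i hi

instance finiteCWlen (n : ℕ) : Finite (CWlen n) := by
  have hinj : Function.Injective (fun w : CWlen n => (fun i : Fin n => (⟨w.1.getD i 0, by
      rcases lt_or_ge (i : ℕ) w.1.length with h | h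
      · rw [List.getD_eq_getElem _ _ h]
        have := entry_le w.2.1 i h
        omega
      · rw [List.getD_eq_default _ _ h]; omega⟩ : Fin (n + 2)))) := by
    rintro ⟨w, hw, hlen⟩ ⟨v, hv, hlen'⟩ hfun
    simp only [Subtype.mk.injEq] at hfun ⊢
    apply List.ext_getElem (by omega)
    intro i h1 h2
    have := congrFun hfun ⟨i, by omega⟩
    simp only [Fin.mk.injEq] at this
    rwa [List.getD_eq_getElem _ _ h1, List.getD_eq_getElem _ _ h2] at this
  exact Finite.of_injective _ hinj

theorem chain_shift_up {l : List ℕ} : ∀ {a : ℕ}, List.Chain R a l →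
    List.Chain R (a + 1) (l.map (· + 1)) := by
  induction l with
  | nil => simp
  | cons b t ih =>
    intro a h
    rw [chain_cons'] at h
    rw [List.map_cons, chain_cons']
    exact ⟨⟨by omega, by have := h.1.2; omega⟩, ih h.2⟩

theorem chain_shift_down {l : List ℕ} (h2 : ∀ y ∈ l, 2 ≤ y) :
    ∀ {a : ℕ}, List.Chain R (a + 1) l → List.Chain R a (l.map (· - 1)) := by
  induction l with
  | nil => simp
  | cons b t ih =>
    intro a h
    rw [chain_cons'] at h
    rw [List.map_cons, chain_cons']
    have hb : 2 ≤ b := h2 b (by simp)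
    have hb2 := h.1.2
    refine ⟨⟨by omega, by omega⟩, ?_⟩
    have hbb : List.Chain R (b - 1 + 1) t := by
      have hh : b - 1 + 1 = b := by omega
      rw [hh]; exact h.2
    exact ih (fun y hy => h2 y (by simp [hy])) hbb

theorem chain_append_one {l : List ℕ} : ∀ {a : ℕ}, List.Chain R a l →
    List.Chain R a (l ++ [1]) := by
  induction l with
  | nil =>
    intro a _
    rw [List.nil_append, chain_singleton']
    exact ⟨one_pos, by omega⟩
  | cons b t ih =>
    intro a h
    rw [chain_cons'] at h
    rw [List.cons_append, chain_cons']
    exact ⟨h.1, ih h.2⟩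

theorem chain_of_append_left {l l' : List ℕ} : ∀ {a : ℕ}, List.Chain R a (l ++ l') →
    List.Chain R a l := by
  induction l with
  | nil => simp
  | cons b t ih =>
    intro a h
    rw [List.cons_append, chain_cons'] at h
    rw [chain_cons']
    exact ⟨h.1, ih h.2⟩

/-- The first-return composition map. -/
def F (n : ℕ) (x : Σ k : Fin (n + 1), CWlen (k : ℕ) × CWlen (n - (k : ℕ))) : CWlen (n + 1) :=
  ⟨1 :: (x.2.1.1.map (· + 1) ++ x.2.2.1), by
    obtain ⟨k, ⟨u, hu, hul⟩, ⟨v, hv, hvl⟩⟩ := x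
    rw [chain_cons']
    refine ⟨⟨one_pos, by omega⟩, ?_⟩
    cases v with
    | nil => simpa using chain_shift_up hu
    | cons b v' =>
      rw [chain_cons'] at hv
      have hb1 := hv.1.1
      have hb2 := hv.1.2
      have hb : b = 1 := by omega
      subst hb
      rw [chain_split']
      exact ⟨chain_append_one (chain_shift_up hu), hv.2⟩, by
    obtain ⟨k, ⟨u, hu, hul⟩, ⟨v, hv, hvl⟩⟩ := x
    simp only [List.length_cons, List.length_append, List.length_map]
    have hk : (k : ℕ) < n + 1 := k.2
    omega⟩

theorem no_one_append_eq {r1 r2 : List ℕ}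
    (hr1 : r1 = [] ∨ ∃ t, r1 = 1 :: t) (hr2 : r2 = [] ∨ ∃ t, r2 = 1 :: t) :
    ∀ {l1 l2 : List ℕ}, l1 ++ r1 = l2 ++ r2 →
    (∀ x ∈ l1, x ≠ 1) → (∀ x ∈ l2, x ≠ 1) →
    l1 = l2 ∧ r1 = r2 := by
  intro l1
  induction l1 with
  | nil =>
    intro l2 h h1 h2
    cases l2 with
    | nil => simpa using h
    | cons y l2' =>
      rcases hr1 with rfl | ⟨t, rfl⟩
      · simp at h
      · simp only [List.nil_append, List.cons_append, List.cons.injEq] at h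
        exact absurd h.1.symm (h2 y (by simp))
  | cons x l1' ih =>
    intro l2 h h1 h2
    cases l2 with
    | nil =>
      rcases hr2 with rfl | ⟨t, rfl⟩
      · simp at h
      · simp only [List.nil_append, List.cons_append, List.cons.injEq] at h
        exact absurd h.1 (h1 x (by simp))
    | cons y l2' =>
      simp only [List.cons_append, List.cons.injEq] at h
      obtain ⟨rfl, h'⟩ := h
      obtain ⟨he, hr⟩ := ih h' (fun z hz => h1 z (by simp [hz]))
        (fun z hz => h2 z (by simp [hz]))
      exact ⟨by rw [he], hr⟩

theorem cw_cases (v : List ℕ) (hv : List.Chain R 0 v) :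
    v = [] ∨ ∃ v', v = 1 :: v' ∧ List.Chain R 1 v' := by
  cases v with
  | nil => exact Or.inl rfl
  | cons b v' =>
    rw [chain_cons'] at hv
    have h1 := hv.1.1
    have h2 := hv.1.2
    have : b = 1 := by omega
    subst this
    exact Or.inr ⟨v', rfl, hv.2⟩

theorem dropWhile_head_false {p : ℕ → Bool} {c : ℕ} {v' : List ℕ} :
    ∀ {t : List ℕ}, t.dropWhile p = c :: v' → p c = false := by
  intro t
  induction t with
  | nil => intro h; simp at h
  | cons a t' ih =>
    intro h
    rw [List.dropWhile_cons] at h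
    by_cases hpa : p a = true
    · rw [if_pos hpa] at h; exact ih h
    · rw [if_neg hpa] at h
      obtain ⟨rfl, _⟩ := List.cons.injEq .. ▸ h
      · simpa using hpa

theorem F_bijective (n : ℕ) : Function.Bijective (F n) := by
  constructor
  · rintro ⟨k, ⟨u, hu, hul⟩, ⟨v, hv, hvl⟩⟩ ⟨k', ⟨u', hu', hul'⟩, ⟨v', hv', hvl'⟩⟩ h
    have h' : u.map (· + 1) ++ v = u'.map (· + 1) ++ v' := by
      have := congrArg Subtype.val h
      simpa [F] using this
    have key := no_one_append_eq ?_ ?_ h'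
      (by rintro x hx; obtain ⟨y, hy, rfl⟩ := List.mem_map.1 hx
          have := chain_pos hu y hy; omega)
      (by rintro x hx; obtain ⟨y, hy, rfl⟩ := List.mem_map.1 hx
          have := chain_pos hu' y hy; omega)
    · obtain ⟨he1, he2⟩ := key
      have huu : u = u' := List.map_injective_iff.2 (fun a b hab => by omega) he1
      subst huu
      subst he2
      have hkk : k = k' := Fin.ext (by rw [← hul, ← hul'])
      subst hkk
      rfl
    · rcases cw_cases v hv with rfl | ⟨w, rfl, _⟩
      · exact Or.inl rfl
      · exact Or.inr ⟨w, rfl⟩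
    · rcases cw_cases v' hv' with rfl | ⟨w, rfl, _⟩
      · exact Or.inl rfl
      · exact Or.inr ⟨w, rfl⟩
  · rintro ⟨w, hw, hlen⟩
    cases w with
    | nil => simp at hlen
    | cons b t =>
      rw [chain_cons'] at hw
      have hb1 := hw.1.1
      have hb2 := hw.1.2
      have hb : b = 1 := by omega
      subst hb
      have ht : List.Chain R 1 t := hw.2
      have hlt : t.length = n := by simpa using hlen
      obtain ⟨u₀, hu₀⟩ : ∃ u₀, t.takeWhile (fun x => x ≠ 1) = u₀ := ⟨_, rfl⟩
      obtain ⟨v, hv⟩ : ∃ v, t.dropWhile (fun x => x ≠ 1) = v := ⟨_, rfl⟩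
      have htuv : u₀ ++ v = t := by
        rw [← hu₀, ← hv]; exact List.takeWhile_append_dropWhile
      have hu₀ne : ∀ x ∈ u₀, x ≠ 1 := fun x hx => by
        rw [← hu₀] at hx
        have := List.mem_takeWhile_imp hx
        simpa using this
      have hu₀2 : ∀ x ∈ u₀, 2 ≤ x := fun x hx => by
        have h1 : 0 < x := chain_pos ht x (htuv ▸ List.mem_append_left v hx)
        have := hu₀ne x hx
        omega
      have hk : u₀.length ≤ n := by
        rw [← hlt, ← htuv]; simp
      have hvcase : v = [] ∨ ∃ v', v = 1 :: v' := by
        cases hvc : v with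
        | nil => exact Or.inl rfl
        | cons c v' =>
          have hc : (fun x => decide (x ≠ 1)) c = false :=
            dropWhile_head_false (p := fun x => decide (x ≠ 1)) (hvc ▸ hv)
          simp only [decide_not, Bool.not_eq_false', decide_eq_true_eq] at hc
          exact Or.inr ⟨v', by rw [hc]⟩
      have hchains : List.Chain R 1 u₀ ∧ List.Chain R 0 v := by
        rcases hvcase with hnil | ⟨v', hcons⟩
        · rw [hnil, List.append_nil] at htuv
          rw [hnil]
          exact ⟨htuv ▸ ht, List.Chain.nil⟩
        · rw [hcons] at htuv
          rw [← htuv, chain_split'] at ht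
          rw [hcons]
          exact ⟨chain_of_append_left ht.1,
            chain_cons'.2 ⟨⟨one_pos, by omega⟩, ht.2⟩⟩
      have humap : List.Chain R 0 (u₀.map (· - 1)) := chain_shift_down hu₀2 hchains.1
      have hvlen : v.length = n - u₀.length := by
        have : u₀.length + v.length = n := by rw [← hlt, ← htuv]; simp
        omega
      refine ⟨⟨⟨u₀.length, by omega⟩, ⟨u₀.map (· - 1), humap, by simp⟩,
        ⟨v, hchains.2, hvlen⟩⟩, ?_⟩
      apply Subtype.ext
      show 1 :: ((u₀.map (· - 1)).map (· + 1) ++ v) = 1 :: t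
      rw [← htuv]
      congr 1
      congr 1
      rw [List.map_map]
      have hid : ∀ x ∈ u₀, ((· + 1) ∘ (· - 1)) x = id x := fun x hx => by
        have := hu₀2 x hx
        simp only [Function.comp_apply, id_eq]
        omega
      rw [List.map_congr_left hid, List.map_id]

noncomputable def W (n : ℕ) : ℕ := Nat.card (CWlen n)

theorem W_zero : W 0 = 1 := by
  rw [W]
  letI : Unique (CWlen 0) :=
    ⟨⟨⟨[], List.Chain.nil, rfl⟩⟩,
      fun x => Subtype.ext (List.length_eq_zero_iff.1 x.2.2)⟩
  exact Nat.card_unique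

theorem W_succ (n : ℕ) : W (n + 1) = ∑ k : Fin (n + 1), W k * W (n - k) := by
  letI : ∀ k : ℕ, Fintype (CWlen k) := fun k => Fintype.ofFinite _
  have h1 := Nat.card_eq_of_bijective _ (F_bijective n)
  rw [W, ← h1, Nat.card_eq_fintype_card, Fintype.card_sigma]
  apply Finset.sum_congr rfl
  intro k _
  rw [Fintype.card_prod, W, W, Nat.card_eq_fintype_card, Nat.card_eq_fintype_card]

theorem W_eq_catalan (n : ℕ) : W n = catalan n := by
  induction n using Nat.strong_induction_on with
  | _ n ih =>
    cases n with
    | zero => simpa using W_zero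
    | succ m =>
      rw [W_succ, catalan_succ]
      apply Finset.sum_congr rfl
      intro k _
      rw [ih k (by omega), ih (m - k) (by omega)]

theorem chain_replicate_peak (a : ℕ) (ha : 0 < a) :
    ∀ (ℓ : ℕ) {b : ℕ}, a ≤ b → List.Chain R b (List.replicate ℓ (a + 1) ++ [a]) := by
  intro ℓ
  induction ℓ with
  | zero =>
    intro b hb
    rw [List.replicate_zero, List.nil_append, chain_singleton']
    exact ⟨ha, by omega⟩
  | succ k ih =>
    intro b hb
    rw [List.replicate_succ, List.cons_append, chain_cons']
    exact ⟨⟨by omega, by omega⟩, ih (by omega)⟩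

theorem chain_middle {A C : List ℕ} {a ℓ : ℕ} (ha : 0 < a) :
    List.Chain R 0 (A ++ a :: (List.replicate ℓ (a + 1) ++ a :: C)) ↔
      List.Chain R 0 (A ++ a :: C) := by
  constructor
  · intro h
    rw [chain_split'] at h
    obtain ⟨h1, h2⟩ := h
    rw [chain_split'] at h2
    rw [chain_split']
    exact ⟨h1, h2.2⟩
  · intro h
    rw [chain_split'] at h
    obtain ⟨h1, h2⟩ := h
    rw [chain_split']
    refine ⟨h1, ?_⟩
    rw [chain_split']
    exact ⟨chain_replicate_peak a ha ℓ le_rfl, h2⟩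

theorem pattern_of_decomp {A C : List ℕ} {a ℓ : ℕ} :
    (((A ++ a :: (List.replicate ℓ (a + 1) ++ a :: C)).drop A.length).take (ℓ + 2)) =
      a :: (List.replicate ℓ (a + 1) ++ [a]) := by
  rw [List.drop_left, List.take_succ_cons]
  congr 1
  rw [List.take_append, List.take_of_length_le (by simp)]
  congr 1
  simp

theorem pattern_decomp {w : List ℕ} {i a ℓ : ℕ}
    (h : (w.drop i).take (ℓ + 2) = a :: (List.replicate ℓ (a + 1) ++ [a])) :
    w = w.take i ++ a :: (List.replicate ℓ (a + 1) ++ a :: w.drop (i + ℓ + 2)) ∧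
      i + (ℓ + 2) ≤ w.length := by
  have hlen : i + (ℓ + 2) ≤ w.length := by
    have := congrArg List.length h
    simp only [List.length_take, List.length_drop, List.length_cons, List.length_append,
      List.length_replicate] at this
    omega
  refine ⟨?_, hlen⟩
  conv_lhs => rw [← List.take_append_drop i w]
  congr 1
  conv_lhs => rw [← List.take_append_drop (ℓ + 2) (w.drop i)]
  rw [h, List.drop_drop]
  have h2 : i + (ℓ + 2) = i + ℓ + 2 := by omega
  rw [h2]
  simp

theorem mid_getD {A C : List ℕ} {a i : ℕ} (h : A.length = i) :
    (A ++ a :: C).getD i 0 = a := by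
  subst h
  rw [List.getD_eq_getElem _ _ (by simp), List.getElem_append_right le_rfl]
  simp

theorem mid_take {A C : List ℕ} {a i : ℕ} (h : A.length = i) :
    (A ++ a :: C).take (i + 1) = A ++ [a] := by
  subst h
  rw [List.take_append]
  simp

theorem mid_drop {A C : List ℕ} {a i : ℕ} (h : A.length = i) :
    (A ++ a :: C).drop (i + 1) = C := by
  subst h
  rw [List.drop_append]
  simp

/-- The triple type of the main theorem. -/
def Trip (n ℓ : ℕ) := {p : List ℕ × ℕ × ℕ //
    IsCatalanWord p.1 ∧ p.1.length = n ∧ 1 ≤ p.2.2 ∧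
    (p.1.drop p.2.1).take (ℓ + 2) =
      p.2.2 :: (List.replicate ℓ (p.2.2 + 1) ++ [p.2.2])}

theorem take_u {u : List ℕ} {p : ℕ} (hp : p < u.length) :
    u.take (p + 1) = u.take p ++ [u[p]] := by
  rw [List.take_succ]
  congr 1
  rw [List.getElem?_eq_getElem hp]
  rfl

def G (m ℓ : ℕ) (x : CWlen m × Fin m) : Trip (m + ℓ + 1) ℓ :=
  ⟨(x.1.1.take ((x.2 : ℕ) + 1) ++
      (List.replicate ℓ (x.1.1.getD (x.2 : ℕ) 0 + 1) ++
        x.1.1.getD (x.2 : ℕ) 0 :: x.1.1.drop ((x.2 : ℕ) + 1)),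
      (x.2 : ℕ), x.1.1.getD (x.2 : ℕ) 0), by
    obtain ⟨⟨u, hu, hul⟩, p⟩ := x
    have hp : (p : ℕ) < u.length := by rw [hul]; exact p.2
    simp only [List.getD_eq_getElem _ _ hp]
    have hsplit : u.take ((p : ℕ) + 1) = u.take (p : ℕ) ++ [u[(p : ℕ)]] := take_u hp
    have hudecomp : u.take (p : ℕ) ++ u[(p : ℕ)] :: u.drop ((p : ℕ) + 1) = u := by
      conv_rhs => rw [← List.take_append_drop ((p : ℕ) + 1) u]
      rw [hsplit, List.append_assoc, List.singleton_append]
    have hpos : 0 < u[(p : ℕ)] := chain_pos hu _ (List.getElem_mem hp)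
    refine ⟨?_, ?_, hpos, ?_⟩
    · rw [isCatalanWord_iff, hsplit, List.append_assoc, List.singleton_append,
        chain_middle hpos, hudecomp]
      exact hu
    · simp only [List.length_append, List.length_take, List.length_cons, List.length_drop,
        List.length_replicate]
      omega
    · have hpat := pattern_of_decomp (A := u.take (p : ℕ)) (C := u.drop ((p : ℕ) + 1))
        (a := u[(p : ℕ)]) (ℓ := ℓ)
      rw [List.length_take, min_eq_left (by omega)] at hpat
      rw [hsplit, List.append_assoc, List.singleton_append]
      exact hpat⟩

theorem G_bijective (m ℓ : ℕ) : Function.Bijective (G m ℓ) := by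
  constructor
  · rintro ⟨⟨u, hu, hul⟩, p⟩ ⟨⟨u', hu', hul'⟩, p'⟩ h
    have hp : (p : ℕ) < u.length := by rw [hul]; exact p.2
    have hp' : (p' : ℕ) < u'.length := by rw [hul']; exact p'.2
    have hval := congrArg Subtype.val h
    simp only [G, Prod.mk.injEq, List.getD_eq_getElem _ _ hp,
      List.getD_eq_getElem _ _ hp'] at hval
    obtain ⟨h1, h2, h3⟩ := hval
    have hpp : p = p' := Fin.ext h2
    subst hpp
    rw [← h3] at h1
    have hlen : (u.take ((p : ℕ) + 1)).length = (u'.take ((p : ℕ) + 1)).length := by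
      simp only [List.length_take]
      omega
    obtain ⟨ht, hr⟩ := List.append_inj h1 (by simpa using hlen)
    have hdrop : u.drop ((p : ℕ) + 1) = u'.drop ((p : ℕ) + 1) := by
      have := (List.append_inj hr (by simp)).2
      exact (List.cons.injEq .. ▸ this).2
    have huu : u = u' := by
      rw [← List.take_append_drop ((p : ℕ) + 1) u, ← List.take_append_drop ((p : ℕ) + 1) u',
        ht, hdrop]
    subst huu
    rfl
  · rintro ⟨⟨w, i, a⟩, hcat, hlen, ha, hpat⟩
    dsimp only at hcat hlen ha hpat
    obtain ⟨hdec, hle⟩ := pattern_decomp hpat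
    rw [isCatalanWord_iff] at hcat
    have hwi : (w.take i).length = i := by
      rw [List.length_take]
      omega
    have hchain : List.Chain R 0 (w.take i ++ a :: w.drop (i + ℓ + 2)) := by
      have h2 := hdec ▸ hcat
      exact (chain_middle (by omega)).1 h2
    have hCl : (w.drop (i + ℓ + 2)).length = w.length - (i + ℓ + 2) := by simp
    have hulen : (w.take i ++ a :: w.drop (i + ℓ + 2)).length = m := by
      simp only [List.length_append, List.length_cons]
      omega
    have him : i < m := by
      simp only [List.length_append, List.length_cons] at hulen
      omega
    refine ⟨⟨⟨w.take i ++ a :: w.drop (i + ℓ + 2), hchain, hulen⟩, ⟨i, him⟩⟩, ?_⟩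
    apply Subtype.ext
    show (_, _, _) = (w, i, a)
    simp only [G, mid_getD hwi, mid_take hwi, mid_drop hwi]
    refine Prod.ext ?_ rfl
    simp only
    rw [List.append_assoc, List.singleton_append, ← hdec]

theorem m_mul_catalan (m' : ℕ) :
    (m' + 1) * catalan (m' + 1) = (2 * (m' + 1)).choose m' := by
  have key := Nat.choose_succ_right_eq (2 * (m' + 1)) m'
  have h2 : 2 * (m' + 1) - m' = m' + 2 := by omega
  rw [h2] at key
  have hcb : (m' + 1 + 1) * catalan (m' + 1) = (2 * (m' + 1)).choose (m' + 1) := by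
    rw [succ_mul_catalan_eq_centralBinom, Nat.centralBinom]
  apply Nat.eq_of_mul_eq_mul_left (show 0 < m' + 2 by omega)
  calc (m' + 2) * ((m' + 1) * catalan (m' + 1))
      = ((m' + 1 + 1) * catalan (m' + 1)) * (m' + 1) := by ring
    _ = (2 * (m' + 1)).choose (m' + 1) * (m' + 1) := by rw [hcb]
    _ = (2 * (m' + 1)).choose m' * (m' + 2) := key
    _ = (m' + 2) * (2 * (m' + 1)).choose m' := by ring

end SymPeaks

/-- Total number of symmetric ℓ-peaks (occurrences of a string a, (a+1)^ℓ, a with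
a ≥ 1, at some position i) over all Catalan words of length n. -/
theorem total_symmetric_ell_peaks (n ℓ : ℕ) (hn : 3 ≤ n) (hl1 : 1 ≤ ℓ) (hl2 : ℓ ≤ n - 2) :
    Nat.card {p : List ℕ × ℕ × ℕ //
        IsCatalanWord p.1 ∧ p.1.length = n ∧ 1 ≤ p.2.2 ∧
        (p.1.drop p.2.1).take (ℓ + 2) =
          p.2.2 :: (List.replicate ℓ (p.2.2 + 1) ++ [p.2.2])} =
      (2 * n - 2 * ℓ - 2).choose (n - ℓ - 2) := by
  obtain ⟨m, rfl⟩ : ∃ m, n = m + ℓ + 1 := ⟨n - ℓ - 1, by omega⟩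
  have hm : 1 ≤ m := by omega
  obtain ⟨m', rfl⟩ : ∃ m', m = m' + 1 := ⟨m - 1, by omega⟩
  have hcard : Nat.card (SymPeaks.Trip (m' + 1 + ℓ + 1) ℓ) =
      Nat.card (SymPeaks.CWlen (m' + 1) × Fin (m' + 1)) :=
    (Nat.card_eq_of_bijective _ (SymPeaks.G_bijective (m' + 1) ℓ)).symm
  show Nat.card (SymPeaks.Trip (m' + 1 + ℓ + 1) ℓ) = _
  rw [hcard, Nat.card_prod]
  have hW : Nat.card (SymPeaks.CWlen (m' + 1)) = catalan (m' + 1) :=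
    SymPeaks.W_eq_catalan (m' + 1)
  rw [hW]
  have hfin : Nat.card (Fin (m' + 1)) = m' + 1 := by
    simp [Nat.card_eq_fintype_card]
  rw [hfin]
  have e1 : 2 * (m' + 1 + ℓ + 1) - 2 * ℓ - 2 = 2 * (m' + 1) := by omega
  have e2 : m' + 1 + ℓ + 1 - ℓ - 2 = m' := by omega
  rw [e1, e2, mul_comm]
  exact SymPeaks.m_mul_catalan m'
end

section
/- For n ≥ 3, the total number of symmetric peaks (over all ℓ ≥ 1) in all Catalan words of length n equals ∑_{k=0}^{n-3} C(2k+2, k). -/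
/-! ### Auxiliary development -/

/-- The step relation of Catalan words. -/
def CR (x y : ℕ) : Prop := 0 < y ∧ y ≤ x + 1

/-- Finset of "extensions": lists of length `m` forming a `CR`-chain from `v`. -/
def ext : ℕ → ℕ → Finset (List ℕ)
  | _, 0 => {[]}
  | v, m + 1 => (Finset.Icc 1 (v + 1)).biUnion fun b => (ext b m).image (b :: ·)

/-- Ballot-style numbers counting the extensions. -/
def ballot : ℕ → ℕ → ℕ
  | _, 0 => 1
  | v, m + 1 => ∑ b ∈ Finset.Icc 1 (v + 1), ballot b m

lemma ballot_succ (v m : ℕ) : ballot v (m + 1) = ∑ b ∈ Finset.Icc 1 (v + 1), ballot b m := rfl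

lemma mem_ext_s4 {w : List ℕ} {v m : ℕ} :
    w ∈ ext v m ↔ w.length = m ∧ List.Chain CR v w := by
  induction m generalizing v w with
  | zero => simp [ext, List.length_eq_zero_iff]; rintro rfl; exact List.IsChain.singleton _
  | succ m ih =>
    simp only [ext, Finset.mem_biUnion, Finset.mem_image, Finset.mem_Icc]
    constructor
    · rintro ⟨b, ⟨hb1, hb2⟩, t, ht, rfl⟩
      obtain ⟨hl, hc⟩ := ih.mp ht
      exact ⟨by simp [hl], List.chain_cons.mpr ⟨⟨hb1, hb2⟩, hc⟩⟩
    · rintro ⟨hl, hc⟩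
      match w with
      | [] => simp at hl
      | b :: t =>
        obtain ⟨⟨hb1, hb2⟩, hc⟩ := List.chain_cons.mp hc
        exact ⟨b, ⟨hb1, hb2⟩, t, ih.mpr ⟨by simpa using hl, hc⟩, rfl⟩

lemma card_ext (v m : ℕ) : (ext v m).card = ballot v m := by
  induction m generalizing v with
  | zero => simp [ext, ballot]
  | succ m ih =>
    rw [ext, ballot, Finset.card_biUnion]
    · exact Finset.sum_congr rfl fun b _ => by
        rw [Finset.card_image_of_injective _ (fun x y h => by simpa using h), ih]
    · intro b _ c _ hbc
      simp only [Finset.disjoint_left, Finset.mem_image]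
      rintro w ⟨t, _, rfl⟩ ⟨t', _, h⟩
      exact hbc (by simpa using (List.cons.injEq _ _ _ _ ▸ h).1.symm)

lemma chain_pos {w : List ℕ} {v : ℕ} (h : List.Chain CR v w) : ∀ x ∈ w, 0 < x := by
  induction w generalizing v with
  | nil => simp
  | cons b t ih =>
    obtain ⟨hb, hc⟩ := List.chain_cons.mp h
    intro x hx
    rcases List.mem_cons.mp hx with rfl | hx
    · exact hb.1
    · exact ih hc x hx

lemma chain_cons_old {R : ℕ → ℕ → Prop} {a b : ℕ} {l : List ℕ} :
    List.Chain R a (b :: l) ↔ R a b ∧ List.Chain R b l :=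
  List.isChain_cons_cons

lemma chain_split_old {R : ℕ → ℕ → Prop} {a b : ℕ} {l₁ l₂ : List ℕ} :
    List.Chain R a (l₁ ++ b :: l₂) ↔ List.Chain R a (l₁ ++ [b]) ∧ List.Chain R b l₂ :=
  List.isChain_cons_split

lemma chain_iff_get_old {R : ℕ → ℕ → Prop} {a : ℕ} {l : List ℕ} :
    List.Chain R a l ↔ (∀ h : 0 < l.length, R a (l[0]'h)) ∧
      ∀ (i : ℕ) (h : i < l.length - 1),
        R (l[i]'(by omega)) (l[i + 1]'(by omega)) := by
  show List.IsChain R (a :: l) ↔ _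
  rw [List.isChain_iff_getElem]
  constructor
  · intro h
    refine ⟨fun h0 => h 0 (by simp; omega), fun i hi => h (i + 1) (by simp; omega)⟩
  · rintro ⟨h0, hs⟩ i hi
    match i with
    | 0 => exact h0 (by simp at hi; omega)
    | j + 1 => exact hs j (by simp at hi; omega)

lemma isCW_iff {w : List ℕ} : IsCatalanWord w ↔ List.Chain CR 0 w := by
  rw [chain_iff_get_old]
  constructor
  · rintro ⟨hpos, hhead, hstep⟩
    constructor
    · intro h
      have h1 := hhead h
      rw [List.getD_eq_getElem _ _ h] at h1
      exact ⟨by omega, by omega⟩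
    · intro i h
      have hi1 : i + 1 < w.length := by omega
      have hi : i < w.length := by omega
      have h2 := hstep i hi1
      rw [List.getD_eq_getElem _ _ hi1, List.getD_eq_getElem _ _ hi] at h2
      exact ⟨hpos _ (List.getElem_mem _), h2⟩
  · rintro ⟨h0, hs⟩
    refine ⟨?_, ?_, ?_⟩
    · intro x hx
      obtain ⟨⟨i, hi⟩, rfl⟩ := List.mem_iff_get.mp hx
      match i with
      | 0 => exact (h0 hi).1
      | j + 1 => exact (hs j (by omega)).1
    · intro h
      obtain ⟨c1, c2⟩ := h0 h
      rw [List.getD_eq_getElem _ _ h]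
      omega
    · intro i h
      have hi : i < w.length := by omega
      rw [List.getD_eq_getElem _ _ h, List.getD_eq_getElem _ _ hi]
      exact (hs i (by omega)).2

lemma chain_rep {a : ℕ} (post : List ℕ) (ha : 0 < a) : ∀ ℓ : ℕ,
    (List.Chain CR (a + 1) (List.replicate ℓ (a + 1) ++ a :: post) ↔ List.Chain CR a post)
  | 0 => by
    simp only [List.replicate, List.nil_append, chain_cons_old]
    exact ⟨fun h => h.2, fun h => ⟨⟨ha, by omega⟩, h⟩⟩
  | ℓ + 1 => by
    rw [List.replicate_succ, List.cons_append, chain_cons_old, chain_rep post ha ℓ]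
    exact ⟨fun h => h.2, fun h => ⟨⟨by omega, by omega⟩, h⟩⟩

lemma chain_insert {pre post : List ℕ} {a ℓ : ℕ} (ha : 0 < a) (hl : 1 ≤ ℓ) :
    List.Chain CR 0 (pre ++ a :: (List.replicate ℓ (a + 1) ++ a :: post)) ↔
      List.Chain CR 0 (pre ++ a :: post) := by
  have h1 : List.Chain CR 0 (pre ++ a :: (List.replicate ℓ (a + 1) ++ a :: post)) ↔
      List.Chain CR 0 (pre ++ [a]) ∧ List.Chain CR a (List.replicate ℓ (a + 1) ++ a :: post) :=
    chain_split_old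
  have h2 : List.Chain CR 0 (pre ++ a :: post) ↔
      List.Chain CR 0 (pre ++ [a]) ∧ List.Chain CR a post := chain_split_old
  rw [h1, h2]
  obtain ⟨ℓ', rfl⟩ : ∃ ℓ', ℓ = ℓ' + 1 := ⟨ℓ - 1, by omega⟩
  rw [List.replicate_succ, List.cons_append, chain_cons_old, chain_rep post ha ℓ']
  constructor
  · rintro ⟨g1, _, g2⟩; exact ⟨g1, g2⟩
  · rintro ⟨g1, g2⟩; exact ⟨g1, ⟨by omega, by omega⟩, g2⟩

lemma reconstruct {u : List ℕ} {i : ℕ} (h : i < u.length) :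
    u.take i ++ u.getD i 0 :: u.drop (i + 1) = u := by
  rw [List.getD_eq_getElem _ _ h]
  conv_rhs => rw [← List.take_append_drop i u, List.drop_eq_getElem_cons h]

lemma two_choose (m : ℕ) : 2 * (2 * m + 1).choose m = (2 * m + 2).choose (m + 1) := by
  rw [show 2 * m + 2 = 2 * m + 1 + 1 from rfl, Nat.choose_succ_succ, Nat.choose_symm_half]
  omega

lemma ballot_key : ∀ m v : ℕ, (ballot v m : ℚ) * (m + v + 1) = (v + 1) * ((2 * m + v).choose m) := by
  intro m
  induction m with
  | zero => intro v; simp [ballot]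
  | succ m ih =>
    intro v
    induction v with
    | zero =>
      rw [ballot_succ, Finset.Icc_self, Finset.sum_singleton]
      have h1 := ih 1
      have h2 : 2 * ((2 * m + 1).choose m : ℚ) = (((2 * m + 2).choose (m + 1) : ℕ) : ℚ) := by
        exact_mod_cast two_choose m
      rw [show 2 * (m + 1) + 0 = 2 * m + 2 from by omega]
      push_cast at h1 h2 ⊢
      linear_combination h1 + h2
    | succ v ihv =>
      rw [ballot_succ, show v + 1 + 1 = v + 2 from rfl,
        show (Finset.Icc 1 (v + 2)) = Finset.Icc 1 (v + 1 + 1) from rfl,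
        Finset.sum_Icc_succ_top (by omega), show v + 1 + 1 = v + 2 from rfl]
      rw [ballot_succ] at ihv
      have hS := ihv
      have hB := ih (v + 2)
      rw [show 2 * m + (v + 2) = 2 * m + v + 2 from by omega] at hB
      rw [show 2 * (m + 1) + v = 2 * m + v + 2 from by omega] at hS
      have hR : ((2 * m + v + 2).choose (m + 1) : ℚ) * (m + 1) =
          ((2 * m + v + 2).choose m : ℚ) * (m + v + 2) := by
        have h := Nat.choose_succ_right_eq (2 * m + v + 2) m
        rw [show 2 * m + v + 2 - m = m + v + 2 from by omega] at h
        exact_mod_cast h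
      have hP : ((2 * m + v + 3).choose (m + 1) : ℚ) =
          ((2 * m + v + 2).choose m : ℚ) + ((2 * m + v + 2).choose (m + 1) : ℚ) := by
        have h : (2 * m + v + 3).choose (m + 1) =
            (2 * m + v + 2).choose m + (2 * m + v + 2).choose (m + 1) :=
          Nat.choose_succ_succ (2 * m + v + 2) m
        exact_mod_cast h
      rw [show 2 * (m + 1) + (v + 1) = 2 * m + v + 3 from by omega]
      push_cast at hS hB ⊢
      have hd : ((m : ℚ) + v + 2) ≠ 0 := by positivity
      apply mul_right_cancel₀ hd
      linear_combination ((m : ℚ) + v + 3) * hS + ((m : ℚ) + v + 2) * hB - hR -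
        ((v : ℚ) + 2) * ((m : ℚ) + v + 2) * hP

lemma key_nat (k : ℕ) : (k + 1) * ballot 1 k = (2 * k + 2).choose k := by
  have h1 := ballot_key k 1
  have h2 : 2 * ((2 * k + 1).choose k : ℚ) = (((2 * k + 2).choose (k + 1) : ℕ) : ℚ) := by
    exact_mod_cast two_choose k
  have h3 : ((2 * k + 2).choose (k + 1) : ℚ) * (k + 1) = ((2 * k + 2).choose k : ℚ) * (k + 2) := by
    have h := Nat.choose_succ_right_eq (2 * k + 2) k
    rw [show 2 * k + 2 - k = k + 2 from by omega] at h
    exact_mod_cast h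
  have key : ((k : ℚ) + 1) * (ballot 1 k : ℚ) * (k + 2) = ((2 * k + 2).choose k : ℚ) * (k + 2) := by
    push_cast at h1 h2 h3 ⊢
    linear_combination ((k : ℚ) + 1) * h1 + ((k : ℚ) + 1) * h2 + h3
  have hd : ((k : ℚ) + 2) ≠ 0 := by positivity
  have h5 := mul_right_cancel₀ hd key
  exact_mod_cast h5

/-- Insert a symmetric peak `(a+1)^ℓ a` after position `i` of the word `u`. -/
def ins (ℓ : ℕ) (p : ℕ × List ℕ) : List ℕ × ℕ × ℕ × ℕ :=
  (p.2.take p.1 ++ p.2.getD p.1 0 ::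
      (List.replicate ℓ (p.2.getD p.1 0 + 1) ++ p.2.getD p.1 0 :: p.2.drop (p.1 + 1)),
    p.1, p.2.getD p.1 0, ℓ)

/-- The finset of all (word, occurrence) pairs of length `n`. -/
def G (n : ℕ) : Finset (List ℕ × ℕ × ℕ × ℕ) :=
  (Finset.Icc 1 (n - 2)).biUnion fun ℓ =>
    ((Finset.range (n - 1 - ℓ)) ×ˢ ext 0 (n - 1 - ℓ)).image (ins ℓ)

lemma mem_G {n : ℕ} (hn : 3 ≤ n) (p : List ℕ × ℕ × ℕ × ℕ) :
    p ∈ G n ↔ IsCatalanWord p.1 ∧ p.1.length = n ∧ 1 ≤ p.2.2.1 ∧ 1 ≤ p.2.2.2 ∧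
      (p.1.drop p.2.1).take (p.2.2.2 + 2) =
        p.2.2.1 :: (List.replicate p.2.2.2 (p.2.2.1 + 1) ++ [p.2.2.1]) := by
  obtain ⟨w, i, a, ℓ⟩ := p
  simp only [G, Finset.mem_biUnion, Finset.mem_image, Finset.mem_Icc, Finset.mem_product,
    Finset.mem_range]
  constructor
  · rintro ⟨ℓ', ⟨hl1, hl2⟩, ⟨⟨i', u⟩, ⟨hi', hu⟩, heq⟩⟩
    have hi2 : i' < n - 1 - ℓ' := hi'
    have hu2 : u ∈ ext 0 (n - 1 - ℓ') := hu
    obtain ⟨hul, huc⟩ := mem_ext_s4.mp hu2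
    obtain rfl : ℓ = ℓ' := (congrArg (fun x => x.2.2.2) heq).symm
    obtain rfl : i = i' := (congrArg (fun x => x.2.1) heq).symm
    obtain rfl : a = u.getD i 0 := (congrArg (fun x => x.2.2.1) heq).symm
    have hew : u.take i ++ u.getD i 0 ::
        (List.replicate ℓ (u.getD i 0 + 1) ++ u.getD i 0 :: u.drop (i + 1)) = w :=
      congrArg (fun x => x.1) heq
    subst hew
    set a := u.getD i 0 with hadef
    have hil : i < u.length := by omega
    have ha : 0 < a := by
      rw [hadef, List.getD_eq_getElem _ _ hil]
      exact chain_pos huc _ (List.getElem_mem _)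
    refine ⟨?_, ?_, ha, hl1, ?_⟩
    · rw [isCW_iff, chain_insert ha hl1, hadef, reconstruct hil]
      exact huc
    · simp only [List.length_append, List.length_take, List.length_cons,
        List.length_replicate, List.length_drop, hul]
      omega
    · have htl : (u.take i).length = i := by rw [List.length_take]; omega
      have h0 : List.drop i (u.take i) = [] := List.drop_eq_nil_of_le (by omega)
      rw [List.drop_append, h0, htl, Nat.sub_self, List.drop_zero,
        List.nil_append, show ℓ + 2 = ℓ + 1 + 1 from rfl, List.take_succ_cons,
        List.take_append, List.take_of_length_le (by simp),
        List.length_replicate, show ℓ + 1 - ℓ = 0 + 1 from by omega, List.take_succ_cons,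
        List.take_zero]
  · rintro ⟨hcw, hlen, ha, hl, heq⟩
    have hL : ((w.drop i).take (ℓ + 2)).length = ℓ + 2 := by rw [heq]; simp
    have hin : i + ℓ + 2 ≤ n := by
      rw [List.length_take, List.length_drop, hlen] at hL
      omega
    have hdrop : w.drop i = a :: (List.replicate ℓ (a + 1) ++ a :: w.drop (i + ℓ + 2)) := by
      conv_lhs => rw [← List.take_append_drop (ℓ + 2) (w.drop i)]
      rw [heq, List.drop_drop, show i + (ℓ + 2) = i + ℓ + 2 from by omega]
      simp
    have hw : w = w.take i ++ a :: (List.replicate ℓ (a + 1) ++ a :: w.drop (i + ℓ + 2)) := by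
      rw [← hdrop, List.take_append_drop]
    have htl : (w.take i).length = i := by rw [List.length_take]; omega
    have hchainw : List.Chain CR 0 w := isCW_iff.mp hcw
    have hchainu : List.Chain CR 0 (w.take i ++ a :: w.drop (i + ℓ + 2)) := by
      rw [← chain_insert ha hl, ← hw]
      exact hchainw
    set u : List ℕ := w.take i ++ a :: w.drop (i + ℓ + 2) with hudef
    have hulen : u.length = n - 1 - ℓ := by
      simp only [hudef, List.length_append, List.length_cons, List.length_drop, htl, hlen]
      omega
    have hga : u.getD i 0 = a := by
      rw [hudef, List.getD_append_right _ _ _ _ (by omega), htl, Nat.sub_self]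
      rfl
    have hta : u.take i = w.take i := by
      rw [hudef, List.take_append, htl, Nat.sub_self, List.take_zero,
        List.append_nil, List.take_take]
      congr 1
      omega
    have hda : u.drop (i + 1) = w.drop (i + ℓ + 2) := by
      rw [hudef, List.drop_append, List.drop_eq_nil_of_le (by omega), htl,
        show i + 1 - i = 0 + 1 from by omega, List.drop_succ_cons, List.drop_zero,
        List.nil_append]
    refine ⟨ℓ, ⟨hl, by omega⟩, ⟨(i, u), ⟨?_, ?_⟩, ?_⟩⟩
    · show i < n - 1 - ℓ
      omega
    · exact mem_ext_s4.mpr ⟨hulen, hchainu⟩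
    · show (u.take i ++ u.getD i 0 ::
          (List.replicate ℓ (u.getD i 0 + 1) ++ u.getD i 0 :: u.drop (i + 1)),
          i, u.getD i 0, ℓ) = (w, i, a, ℓ)
      rw [hga, hta, hda, ← hw]

/-- Total number of symmetric peaks (occurrences of a string a, (a+1)^ℓ, a with
a ≥ 1, ℓ ≥ 1, at some position i) over all Catalan words of length n. -/
theorem total_symmetric_peaks (n : ℕ) (hn : 3 ≤ n) :
    Nat.card {p : List ℕ × ℕ × ℕ × ℕ //
        IsCatalanWord p.1 ∧ p.1.length = n ∧ 1 ≤ p.2.2.1 ∧ 1 ≤ p.2.2.2 ∧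
        (p.1.drop p.2.1).take (p.2.2.2 + 2) =
          p.2.2.1 :: (List.replicate p.2.2.2 (p.2.2.1 + 1) ++ [p.2.2.1])} =
      ∑ k ∈ Finset.range (n - 2), (2 * k + 2).choose k := by
  rw [Nat.card_congr (Equiv.subtypeEquivRight fun p => (mem_G hn p).symm),
    Nat.card_eq_finsetCard]
  have hdisj : ∀ ℓ ∈ Finset.Icc 1 (n - 2), ∀ ℓ' ∈ Finset.Icc 1 (n - 2), ℓ ≠ ℓ' →
      Disjoint (((Finset.range (n - 1 - ℓ)) ×ˢ ext 0 (n - 1 - ℓ)).image (ins ℓ))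
        (((Finset.range (n - 1 - ℓ')) ×ˢ ext 0 (n - 1 - ℓ')).image (ins ℓ')) := by
    intro ℓ _ ℓ' _ hne
    simp only [Finset.disjoint_left, Finset.mem_image]
    rintro p ⟨q, _, rfl⟩ ⟨q', _, h⟩
    exact hne (congrArg (fun x => x.2.2.2) h).symm
  rw [G, Finset.card_biUnion hdisj]
  have hterm : ∀ ℓ ∈ Finset.Icc 1 (n - 2),
      (((Finset.range (n - 1 - ℓ)) ×ˢ ext 0 (n - 1 - ℓ)).image (ins ℓ)).card =
        (n - 1 - ℓ) * ballot 0 (n - 1 - ℓ) := by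
    intro ℓ hℓ
    rw [Finset.card_image_of_injOn, Finset.card_product, Finset.card_range, card_ext]
    rintro ⟨i, u⟩ hmem ⟨i', u'⟩ hmem' heq
    have hm := Finset.mem_product.mp (Finset.mem_coe.mp hmem)
    have hm' := Finset.mem_product.mp (Finset.mem_coe.mp hmem')
    have hi : i < n - 1 - ℓ := Finset.mem_range.mp hm.1
    have hi' : i' < n - 1 - ℓ := Finset.mem_range.mp hm'.1
    have hu : u ∈ ext 0 (n - 1 - ℓ) := hm.2
    have hu' : u' ∈ ext 0 (n - 1 - ℓ) := hm'.2
    obtain ⟨hul, -⟩ := mem_ext_s4.mp hu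
    obtain ⟨hul', -⟩ := mem_ext_s4.mp hu'
    obtain rfl : i = i' := congrArg (fun x => x.2.1) heq
    have h3 : u.getD i 0 = u'.getD i 0 := congrArg (fun x => x.2.2.1) heq
    have h1 : u.take i ++ u.getD i 0 ::
        (List.replicate ℓ (u.getD i 0 + 1) ++ u.getD i 0 :: u.drop (i + 1)) =
        u'.take i ++ u'.getD i 0 ::
        (List.replicate ℓ (u'.getD i 0 + 1) ++ u'.getD i 0 :: u'.drop (i + 1)) :=
      congrArg (fun x => x.1) heq
    rw [h3] at h1
    obtain ⟨e1, e2⟩ := List.append_inj h1 (by rw [List.length_take, List.length_take]; omega)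
    injection e2 with e2h e3
    have e4 := List.append_cancel_left e3
    injection e4 with e4h e5
    have hueq : u = u' := by
      rw [← reconstruct (show i < u.length from by omega),
        ← reconstruct (show i < u'.length from by omega), e1, h3, e5]
    exact congrArg (Prod.mk i) hueq
  rw [Finset.sum_congr rfl hterm]
  refine Finset.sum_nbij' (fun ℓ => n - 2 - ℓ) (fun k => n - 2 - k) ?_ ?_ ?_ ?_ ?_
  · intro ℓ hℓ
    simp only [Finset.mem_Icc] at hℓ
    simp only [Finset.mem_range]
    omega
  · intro k hk
    simp only [Finset.mem_range] at hk
    simp only [Finset.mem_Icc]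
    omega
  · intro ℓ hℓ
    simp only [Finset.mem_Icc] at hℓ
    show n - 2 - (n - 2 - ℓ) = ℓ
    omega
  · intro k hk
    simp only [Finset.mem_range] at hk
    show n - 2 - (n - 2 - k) = k
    omega
  · intro ℓ hℓ
    simp only [Finset.mem_Icc] at hℓ
    show (n - 1 - ℓ) * ballot 0 (n - 1 - ℓ) = (2 * (n - 2 - ℓ) + 2).choose (n - 2 - ℓ)
    rw [show n - 1 - ℓ = (n - 2 - ℓ) + 1 from by omega]
    generalize n - 2 - ℓ = k
    rw [ballot_succ, Finset.Icc_self, Finset.sum_singleton]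
    exact key_nat k
end

section
/- For n ≥ 3 and 1 ≤ ℓ ≤ n-2, the total number of ℓ-peaks over all Catalan words of length n equals C(2n-2ℓ-1, n-ℓ-2). -/
open Finset
def lastD (w : List ℕ) : ℕ := w.getD (w.length - 1) 0
lemma getD_append' (w : List ℕ) (j : ℕ) (i : ℕ) :
    (w ++ [j]).getD i 0 = if i < w.length then w.getD i 0 else if i = w.length then j else 0 := by
  split_ifs with h1 h2
  · exact List.getD_append _ _ _ _ h1
  · rw [List.getD_append_right _ _ _ _ (le_of_eq h2.symm), h2, Nat.sub_self]; rfl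
  · rw [List.getD_eq_default]
    simp only [List.length_append, List.length_singleton]
    omega
lemma lastD_append (w : List ℕ) (j : ℕ) : lastD (w ++ [j]) = j := by
  unfold lastD; rw [getD_append']; simp
lemma getD_mem {w : List ℕ} {i : ℕ} (h : i < w.length) : w.getD i 0 ∈ w := by
  rw [List.getD_eq_getElem _ _ h]; exact List.getElem_mem _
lemma getD_dropLast (w : List ℕ) (i : ℕ) (h : i < w.length - 1) :
    w.dropLast.getD i 0 = w.getD i 0 := by
  rw [List.dropLast_eq_take, List.getD_eq_getElem?_getD, List.getD_eq_getElem?_getD,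
    List.getElem?_take]
  simp [h]

lemma cat_append {w : List ℕ} (hw : IsCatalanWord w) {j : ℕ} (h1 : 1 ≤ j)
    (h2 : j ≤ lastD w + 1) : IsCatalanWord (w ++ [j]) := by
  obtain ⟨hpos, hfirst, hstep⟩ := hw
  refine ⟨?_, ?_, ?_⟩
  · intro x hx
    rcases List.mem_append.mp hx with h | h
    · exact hpos x h
    · simp at h; omega
  · intro _
    rcases List.eq_nil_or_concat w with rfl | hconc
    · have : j = 1 := by simp [lastD] at h2; omega
      subst this; simp
    · have hw0 : 0 < w.length := by rcases hconc with ⟨L,b,rfl⟩; simp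
      rw [getD_append', if_pos hw0]
      exact hfirst hw0
  · intro i hi
    simp only [List.length_append, List.length_singleton] at hi
    rw [getD_append', getD_append']
    split_ifs with a1 a2 a3 a4 a5 <;> try omega
    · exact hstep i (by omega)
    · -- i+1 = w.length, i < w.length : last step
      have : i = w.length - 1 := by omega
      subst this
      unfold lastD at h2
      omega

lemma cat_dropLast {w : List ℕ} (hw : IsCatalanWord w) : IsCatalanWord w.dropLast := by
  obtain ⟨hpos, hfirst, hstep⟩ := hw
  have hlen : w.dropLast.length = w.length - 1 := List.length_dropLast
  refine ⟨?_, ?_, ?_⟩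
  · intro x hx; exact hpos x (List.dropLast_subset w hx)
  · intro h
    rw [hlen] at h
    rw [getD_dropLast _ _ h]
    exact hfirst (by omega)
  · intro i hi
    rw [hlen] at hi
    rw [getD_dropLast _ _ (by omega), getD_dropLast _ _ (by omega)]
    exact hstep i (by omega)

lemma cat_pos {w : List ℕ} (hw : IsCatalanWord w) {i : ℕ} (hi : i < w.length) :
    1 ≤ w.getD i 0 := hw.1 _ (getD_mem hi)

lemma cat_getD_le {w : List ℕ} (hw : IsCatalanWord w) {a b : ℕ} (hab : a ≤ b)
    (hb : b < w.length) : w.getD b 0 ≤ w.getD a 0 + (b - a) := by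
  obtain ⟨k, rfl⟩ := Nat.exists_eq_add_of_le hab
  induction k with
  | zero => simp
  | succ k ih =>
    have h1 : a + k + 1 < w.length := by omega
    have := hw.2.2 (a + k) (by omega)
    have := ih (by omega) (by omega)
    have heq : a + (k+1) = a + k + 1 := by omega
    rw [heq]
    omega

lemma cat_getD_le' {w : List ℕ} (hw : IsCatalanWord w) {i : ℕ} (hi : i < w.length) :
    w.getD i 0 ≤ i + 1 := by
  have h0 : 0 < w.length := by omega
  have := cat_getD_le hw (Nat.zero_le i) hi
  have := hw.2.1 h0
  omega

lemma lastD_le {w : List ℕ} (hw : IsCatalanWord w) : lastD w ≤ w.length := by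
  rcases Nat.eq_zero_or_pos w.length with h | h
  · unfold lastD; rw [List.getD_eq_default _ _ (by omega : w.length ≤ w.length - 1)]; omega
  · have := cat_getD_le' hw (show w.length - 1 < w.length by omega)
    unfold lastD; omega

lemma lastD_pos {w : List ℕ} (hw : IsCatalanWord w) (h : w ≠ []) : 1 ≤ lastD w := by
  have hl : 0 < w.length := List.length_pos_iff.mpr h
  exact cat_pos hw (show w.length - 1 < w.length by omega)

def CW : ℕ → Finset (List ℕ)
  | 0 => {([] : List ℕ)}
  | n+1 => (CW n).biUnion fun w => (Finset.Icc 1 (lastD w + 1)).image fun j => w ++ [j]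

lemma lastD_eq_getLast {w : List ℕ} (h : w ≠ []) : lastD w = w.getLast h := by
  have hl : 0 < w.length := List.length_pos_iff.mpr h
  rw [List.getLast_eq_getElem, lastD, List.getD_eq_getElem _ _ (by omega)]

lemma eq_dropLast_append {w : List ℕ} (h : w ≠ []) : w = w.dropLast ++ [lastD w] := by
  rw [lastD_eq_getLast h, List.dropLast_append_getLast h]

lemma mem_CW {n : ℕ} {w : List ℕ} : w ∈ CW n ↔ IsCatalanWord w ∧ w.length = n := by
  induction n generalizing w with
  | zero =>
    simp only [CW, Finset.mem_singleton]
    constructor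
    · rintro rfl
      exact ⟨⟨by simp, by simp, by simp⟩, rfl⟩
    · rintro ⟨_, hl⟩
      exact List.length_eq_zero_iff.mp hl
  | succ n ih =>
    simp only [CW, Finset.mem_biUnion, Finset.mem_image, Finset.mem_Icc]
    constructor
    · rintro ⟨v, hv, j, ⟨hj1, hj2⟩, rfl⟩
      obtain ⟨hcat, hlen⟩ := ih.mp hv
      exact ⟨cat_append hcat hj1 hj2, by simp [hlen]⟩
    · rintro ⟨hcat, hlen⟩
      have hne : w ≠ [] := by intro h; subst h; simp at hlen
      refine ⟨w.dropLast, ih.mpr ⟨cat_dropLast hcat, by simp [hlen]⟩, lastD w,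
        ⟨lastD_pos hcat hne, ?_⟩, (eq_dropLast_append hne).symm⟩
      rcases Nat.eq_zero_or_pos n with rfl | hn
      · have : lastD w = 1 := by
          unfold lastD
          rw [hlen]
          exact hcat.2.1 (by omega)
        omega
      · have hstep := hcat.2.2 (n-1) (by omega)
        have h1 : lastD w.dropLast = w.getD (n-1) 0 := by
          unfold lastD
          rw [List.length_dropLast, hlen]
          exact getD_dropLast _ _ (by omega)
        have h2 : lastD w = w.getD n 0 := by unfold lastD; rw [hlen]; rfl
        have h3 : n - 1 + 1 = n := by omega
        rw [h3] at hstep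
        omega

def pkP (l : ℕ) (w : List ℕ) (i : ℕ) : Prop :=
  (w.drop i).take (l + 2) =
    w.getD i 0 :: (List.replicate l (w.getD i 0 + 1) ++ [w.getD (i + l + 1) 0]) ∧
  1 ≤ w.getD (i + l + 1) 0 ∧ w.getD (i + l + 1) 0 ≤ w.getD i 0

instance (l w) : DecidablePred (pkP l w) := fun _ => by unfold pkP; infer_instance

def pk (l : ℕ) (w : List ℕ) : ℕ := ((Finset.range w.length).filter (pkP l w)).card

def aw (l : ℕ) (w : List ℕ) : ℕ := w.getD (w.length - l - 1) 0

def EndsPat (l : ℕ) (w : List ℕ) : Prop :=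
  w.drop (w.length - l - 1) = aw l w :: List.replicate l (aw l w + 1)

instance (l) : DecidablePred (EndsPat l) := fun _ => by unfold EndsPat; infer_instance

lemma pkP_len {l w i} (h : pkP l w i) : i + l + 2 ≤ w.length := by
  have := congrArg List.length h.1
  simp [List.length_take, List.length_drop, List.length_replicate] at this
  omega

lemma EndsPat_len {l : ℕ} {w : List ℕ} (h : EndsPat l w) : l + 1 ≤ w.length := by
  have := congrArg List.length h
  simp [List.length_drop, List.length_replicate] at this
  omega

lemma pk_eq_zero {l : ℕ} {w : List ℕ} (h : w.length ≤ l + 1) : pk l w = 0 := by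
  unfold pk
  rw [Finset.card_eq_zero, Finset.filter_eq_empty_iff]
  intro i _
  intro hp
  have := pkP_len hp
  omega

lemma pk_pos_lastD {l : ℕ} {w : List ℕ} (hw : IsCatalanWord w) (h : 0 < pk l w) :
    lastD w + l + 1 ≤ w.length := by
  unfold pk at h
  rw [Finset.card_pos] at h
  obtain ⟨i, hi⟩ := h
  rw [Finset.mem_filter] at hi
  obtain ⟨-, hp⟩ := hi
  have hlen := pkP_len hp
  have hai : w.getD i 0 ≤ i + 1 := cat_getD_le' hw (by omega)
  have hba := hp.2.2
  have hchain : w.getD (w.length - 1) 0 ≤ w.getD (i + l + 1) 0 + (w.length - 1 - (i + l + 1)) :=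
    cat_getD_le hw (by omega) (by omega)
  unfold lastD
  omega

lemma drop_append_single {w : List ℕ} {i : ℕ} (h : i ≤ w.length) (j : ℕ) :
    (w ++ [j]).drop i = w.drop i ++ [j] := List.drop_append_of_le_length h

lemma pkP_append_low {l : ℕ} {w : List ℕ} {i j : ℕ} (h : i + l + 2 ≤ w.length) :
    pkP l (w ++ [j]) i ↔ pkP l w i := by
  have h1 : (w ++ [j]).getD i 0 = w.getD i 0 := List.getD_append _ _ _ _ (by omega)
  have h2 : (w ++ [j]).getD (i + l + 1) 0 = w.getD (i + l + 1) 0 :=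
    List.getD_append _ _ _ _ (by omega)
  have h3 : ((w ++ [j]).drop i).take (l + 2) = (w.drop i).take (l + 2) := by
    rw [drop_append_single (by omega), List.take_append_of_le_length]
    rw [List.length_drop]; omega
  unfold pkP
  rw [h1, h2, h3]

lemma pkP_append_high {l : ℕ} {w : List ℕ} {j : ℕ} (hj : 1 ≤ j) (hN : l + 1 ≤ w.length) :
    pkP l (w ++ [j]) (w.length - l - 1) ↔ (EndsPat l w ∧ j ≤ aw l w) := by
  set i := w.length - l - 1 with hi
  have hil : i + l + 1 = w.length := by omega
  have h1 : (w ++ [j]).getD i 0 = aw l w := by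
    rw [List.getD_append _ _ _ _ (by omega)]; rfl
  have h2 : (w ++ [j]).getD (i + l + 1) 0 = j := by
    rw [hil, List.getD_append_right _ _ _ _ (le_refl _), Nat.sub_self]; rfl
  have h3 : ((w ++ [j]).drop i).take (l + 2) = w.drop i ++ [j] := by
    rw [drop_append_single (by omega)]
    rw [List.take_of_length_le]
    simp [List.length_drop]; omega
  unfold pkP
  rw [h1, h2, h3]
  constructor
  · rintro ⟨he, h4, h5⟩
    refine ⟨?_, h5⟩
    have : w.drop i ++ [j] = (aw l w :: List.replicate l (aw l w + 1)) ++ [j] := by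
      simpa using he
    exact List.append_cancel_right this
  · rintro ⟨he, h5⟩
    rw [EndsPat] at he
    rw [← hi] at he
    refine ⟨?_, hj, h5⟩
    rw [he]; simp

lemma pk_append {l : ℕ} (w : List ℕ) (j : ℕ) (hj : 1 ≤ j) :
    pk l (w ++ [j]) = pk l w + (if EndsPat l w ∧ j ≤ aw l w then 1 else 0) := by
  classical
  set N := w.length with hN
  have hlen : (w ++ [j]).length = N + 1 := by simp [hN]
  unfold pk
  rw [hlen, ← hN]
  set S := (Finset.range N).filter (pkP l w) with hS
  have key : (Finset.range (N+1)).filter (pkP l (w ++ [j])) =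
      if EndsPat l w ∧ j ≤ aw l w then insert (N - l - 1) S else S := by
    ext i
    simp only [Finset.mem_filter, Finset.mem_range]
    split_ifs with hc
    · have hNl : l + 1 ≤ N := EndsPat_len hc.1
      rw [Finset.mem_insert]
      constructor
      · rintro ⟨hi, hp⟩
        by_cases hlow : i + l + 2 ≤ N
        · right
          rw [hS, Finset.mem_filter, Finset.mem_range]
          exact ⟨by omega, (pkP_append_low hlow).mp hp⟩
        · left
          have := pkP_len hp
          rw [hlen] at this
          omega
      · rintro (rfl | hm)
        · exact ⟨by omega, (pkP_append_high hj hNl).mpr hc⟩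
        · rw [hS, Finset.mem_filter, Finset.mem_range] at hm
          have := pkP_len hm.2
          exact ⟨by omega, (pkP_append_low (by omega)).mpr hm.2⟩
    · constructor
      · rintro ⟨hi, hp⟩
        by_cases hlow : i + l + 2 ≤ N
        · rw [hS, Finset.mem_filter, Finset.mem_range]
          exact ⟨by omega, (pkP_append_low hlow).mp hp⟩
        · exfalso
          have hple := pkP_len hp
          rw [hlen] at hple
          have hieq : i = N - l - 1 ∧ l + 1 ≤ N := by omega
          obtain ⟨rfl, hNl⟩ := hieq
          exact hc ((pkP_append_high hj hNl).mp hp)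
      · intro hm
        rw [hS, Finset.mem_filter, Finset.mem_range] at hm
        have := pkP_len hm.2
        exact ⟨by omega, (pkP_append_low (by omega)).mpr hm.2⟩
  rw [key]
  split_ifs with hc
  · have hNl : l + 1 ≤ N := EndsPat_len hc.1
    have hnotmem : N - l - 1 ∉ S := by
      rw [hS, Finset.mem_filter]
      rintro ⟨-, hp⟩
      have := pkP_len hp
      omega
    rw [Finset.card_insert_of_notMem hnotmem]
  · omega

def Phi (n j : ℕ) : ℕ := ((CW n).filter fun w => j ≤ lastD w).card

def PKc (l n j : ℕ) : ℕ := ∑ w ∈ (CW n).filter (fun w => j ≤ lastD w), pk l w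

def Psi (l n j : ℕ) : ℕ := ((CW n).filter fun w => EndsPat l w ∧ j ≤ aw l w).card

lemma filter_lastD_split (n j : ℕ) :
    (CW n).filter (fun w => j ≤ lastD w) =
      ((CW n).filter fun w => lastD w = j) ∪ ((CW n).filter fun w => j + 1 ≤ lastD w) := by
  ext w
  simp only [Finset.mem_filter, Finset.mem_union]
  constructor
  · rintro ⟨h1, h2⟩
    rcases eq_or_lt_of_le h2 with h | h
    · exact Or.inl ⟨h1, h.symm⟩
    · exact Or.inr ⟨h1, h⟩
  · rintro (⟨h1, h2⟩ | ⟨h1, h2⟩) <;> exact ⟨h1, by omega⟩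

lemma filter_lastD_disj (n j : ℕ) :
    Disjoint ((CW n).filter fun w => lastD w = j) ((CW n).filter fun w => j + 1 ≤ lastD w) := by
  rw [Finset.disjoint_left]
  intro w h1 h2
  rw [Finset.mem_filter] at h1 h2
  omega

lemma Phi_split (n j : ℕ) :
    Phi n j = ((CW n).filter fun w => lastD w = j).card + Phi n (j+1) := by
  unfold Phi
  rw [filter_lastD_split n j, Finset.card_union_of_disjoint (filter_lastD_disj n j)]

lemma PKc_split (l n j : ℕ) :
    PKc l n j = (∑ w ∈ (CW n).filter (fun w => lastD w = j), pk l w) + PKc l n (j+1) := by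
  unfold PKc
  rw [filter_lastD_split n j, Finset.sum_union (filter_lastD_disj n j)]

lemma Phi_zero {n j : ℕ} (h : n < j) : Phi n j = 0 := by
  unfold Phi
  rw [Finset.card_eq_zero, Finset.filter_eq_empty_iff]
  intro w hw
  obtain ⟨hcat, hlen⟩ := mem_CW.mp hw
  have := lastD_le hcat
  omega

lemma PKc_zero {l n j : ℕ} (h : n ≤ j + l) : PKc l n j = 0 := by
  unfold PKc
  apply Finset.sum_eq_zero
  intro w hw
  rw [Finset.mem_filter] at hw
  obtain ⟨hw, hlast⟩ := hw
  obtain ⟨hcat, hlen⟩ := mem_CW.mp hw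
  by_contra hne
  have := pk_pos_lastD hcat (Nat.pos_of_ne_zero hne)
  omega

lemma Phi_zero_one (n : ℕ) (hn : 1 ≤ n) : Phi n 0 = Phi n 1 := by
  unfold Phi
  congr 1
  apply Finset.filter_congr
  intro w hw
  obtain ⟨hcat, hlen⟩ := mem_CW.mp hw
  have : w ≠ [] := by intro h; subst h; simp at hlen; omega
  simp [lastD_pos hcat this]

lemma PKc_zero_one (l n : ℕ) (hn : 1 ≤ n) : PKc l n 0 = PKc l n 1 := by
  unfold PKc
  congr 1
  apply Finset.filter_congr
  intro w hw
  obtain ⟨hcat, hlen⟩ := mem_CW.mp hw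
  have : w ≠ [] := by intro h; subst h; simp at hlen; omega
  simp [lastD_pos hcat this]

lemma lastD_le_dropLast {w : List ℕ} (hw : IsCatalanWord w) (h : 1 ≤ w.length) :
    lastD w ≤ lastD w.dropLast + 1 := by
  rcases Nat.lt_or_ge w.length 2 with h2 | h2
  · have h1 : w.length = 1 := by omega
    have : lastD w = 1 := by
      unfold lastD; rw [h1]; exact hw.2.1 (by omega)
    omega
  · have hstep := hw.2.2 (w.length - 2) (by omega)
    have hd : lastD w.dropLast = w.getD (w.length - 2) 0 := by
      unfold lastD
      rw [List.length_dropLast]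
      have : w.length - 1 - 1 = w.length - 2 := by omega
      rw [this]
      exact getD_dropLast _ _ (by omega)
    have : w.length - 2 + 1 = w.length - 1 := by omega
    rw [this] at hstep
    rw [hd]
    unfold lastD
    omega

lemma CW_mem_ne_nil {n : ℕ} {w : List ℕ} (hw : w ∈ CW (n+1)) : w ≠ [] := by
  obtain ⟨-, hlen⟩ := mem_CW.mp hw
  intro h; subst h; simp at hlen

lemma step_maps₁ {n j : ℕ} (hj : 1 ≤ j) :
    ∀ w ∈ (CW (n+1)).filter (fun w => lastD w = j),
      w.dropLast ∈ (CW n).filter (fun v => j - 1 ≤ lastD v) := by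
  intro w hw
  rw [Finset.mem_filter] at hw ⊢
  obtain ⟨hw, hlast⟩ := hw
  obtain ⟨hcat, hlen⟩ := mem_CW.mp hw
  refine ⟨mem_CW.mpr ⟨cat_dropLast hcat, by simp [hlen]⟩, ?_⟩
  have := lastD_le_dropLast hcat (by omega)
  omega

lemma step_maps₂ {n j : ℕ} (hj : 1 ≤ j) :
    ∀ v ∈ (CW n).filter (fun v => j - 1 ≤ lastD v),
      v ++ [j] ∈ (CW (n+1)).filter (fun w => lastD w = j) := by
  intro v hv
  rw [Finset.mem_filter] at hv ⊢
  obtain ⟨hv, hlast⟩ := hv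
  obtain ⟨hcat, hlen⟩ := mem_CW.mp hv
  exact ⟨mem_CW.mpr ⟨cat_append hcat hj (by omega), by simp [hlen]⟩, lastD_append _ _⟩

lemma step_inv₁ {n j : ℕ} :
    ∀ w ∈ (CW (n+1)).filter (fun w => lastD w = j), w.dropLast ++ [j] = w := by
  intro w hw
  rw [Finset.mem_filter] at hw
  obtain ⟨hw, hlast⟩ := hw
  rw [← hlast]
  exact (eq_dropLast_append (CW_mem_ne_nil hw)).symm

lemma F_step (n j : ℕ) (hj : 1 ≤ j) :
    ((CW (n+1)).filter fun w => lastD w = j).card = Phi n (j-1) := by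
  unfold Phi
  exact Finset.card_nbij' (fun w => w.dropLast) (fun v => v ++ [j])
    (step_maps₁ hj) (step_maps₂ hj) (step_inv₁)
    (fun v _ => List.dropLast_concat)

lemma getD_drop (w : List ℕ) (i k : ℕ) : (w.drop i).getD k 0 = w.getD (i + k) 0 := by
  rw [List.getD_eq_getElem?_getD, List.getD_eq_getElem?_getD, List.getElem?_drop]

lemma EndsPat_lastD {l : ℕ} (hl : 1 ≤ l) {w : List ℕ} (h : EndsPat l w) :
    lastD w = aw l w + 1 := by
  have hlen := EndsPat_len h
  have h1 : w.length - 1 = (w.length - l - 1) + l := by omega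
  unfold lastD
  rw [h1, ← getD_drop, h]
  obtain ⟨t, rfl⟩ : ∃ t, l = t + 1 := ⟨l - 1, by omega⟩
  rw [List.getD_cons_succ, List.getD_eq_getElem?_getD, List.getElem?_replicate,
    if_pos (by omega : t < t + 1)]
  rfl

lemma PK_step (l n j : ℕ) (hl : 1 ≤ l) (hj : 1 ≤ j) :
    (∑ w ∈ (CW (n+1)).filter (fun w => lastD w = j), pk l w) = PKc l n (j-1) + Psi l n j := by
  have h1 : (∑ w ∈ (CW (n+1)).filter (fun w => lastD w = j), pk l w) =
      ∑ v ∈ (CW n).filter (fun v => j - 1 ≤ lastD v),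
        (pk l v + (if EndsPat l v ∧ j ≤ aw l v then 1 else 0)) := by
    refine Finset.sum_nbij' (fun w => w.dropLast) (fun v => v ++ [j])
      (step_maps₁ hj) (step_maps₂ hj) (step_inv₁)
      (fun v _ => List.dropLast_concat) ?_
    intro w hw
    have hinv := step_inv₁ w hw
    conv_lhs => rw [← hinv]
    exact pk_append _ _ hj
  rw [h1, Finset.sum_add_distrib]
  congr 1
  rw [Finset.sum_boole]
  push_cast
  unfold Psi
  rw [Finset.filter_filter]
  congr 1
  ext w
  simp only [Finset.mem_filter]
  constructor
  · rintro ⟨hw, -, hc⟩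
    exact ⟨hw, hc⟩
  · rintro ⟨hw, hc⟩
    refine ⟨hw, ?_, hc⟩
    have := EndsPat_lastD hl hc.1
    omega

lemma getD_take {w : List ℕ} {t i : ℕ} (h : i < t) : (w.take t).getD i 0 = w.getD i 0 := by
  rw [List.getD_eq_getElem?_getD, List.getD_eq_getElem?_getD, List.getElem?_take, if_pos h]

lemma cat_take {w : List ℕ} (hw : IsCatalanWord w) (t : ℕ) : IsCatalanWord (w.take t) := by
  obtain ⟨hpos, hfirst, hstep⟩ := hw
  refine ⟨fun x hx => hpos x (List.take_subset _ _ hx), ?_, ?_⟩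
  · intro h
    rw [List.length_take] at h
    rw [getD_take (by omega)]
    exact hfirst (by omega)
  · intro i hi
    rw [List.length_take] at hi
    rw [getD_take (by omega), getD_take (by omega)]
    exact hstep i (by omega)

lemma cat_append_replicate {v : List ℕ} (hv : IsCatalanWord v) (hne : v ≠ [])
    {c : ℕ} (hc1 : 1 ≤ c) (hc2 : c ≤ lastD v + 1) (t : ℕ) :
    IsCatalanWord (v ++ List.replicate t c) := by
  induction t generalizing v with
  | zero => simpa using hv
  | succ t ih =>
    have h1 : v ++ List.replicate (t+1) c = (v ++ [c]) ++ List.replicate t c := by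
      rw [List.append_assoc]
      congr 1
    rw [h1]
    exact ih (cat_append hv hc1 hc2) (by simp) (by rw [lastD_append]; omega)

lemma drop_length_sub_one {v : List ℕ} (h : v ≠ []) : v.drop (v.length - 1) = [lastD v] := by
  have h2 : v.length - 1 = v.dropLast.length := by
    rw [List.length_dropLast]
  rw [h2]
  nth_rewrite 2 [eq_dropLast_append h]
  rw [List.drop_left]

lemma Psi_eq (l n j : ℕ) (hl : 1 ≤ l) (hn : l + 1 ≤ n) (hj : 1 ≤ j) :
    Psi l n j = Phi (n - l) j := by
  unfold Psi Phi
  refine Finset.card_nbij' (fun w => w.take (n - l))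
    (fun v => v ++ List.replicate l (lastD v + 1)) ?_ ?_ ?_ ?_
  · intro w hw
    rw [Finset.mem_coe, Finset.mem_filter] at hw ⊢
    obtain ⟨hw, hpat, hja⟩ := hw
    obtain ⟨hcat, hlen⟩ := mem_CW.mp hw
    have hlen2 : (w.take (n - l)).length = n - l := by
      rw [List.length_take]; omega
    refine ⟨mem_CW.mpr ⟨cat_take hcat _, hlen2⟩, ?_⟩
    have hx : lastD (w.take (n - l)) = aw l w := by
      unfold lastD aw
      rw [hlen2, hlen]
      exact getD_take (by omega)
    show j ≤ lastD (w.take (n - l))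
    omega
  · intro v hv
    rw [Finset.mem_coe, Finset.mem_filter] at hv ⊢
    obtain ⟨hv, hlv⟩ := hv
    obtain ⟨hcat, hlen⟩ := mem_CW.mp hv
    have hne : v ≠ [] := by intro h; subst h; simp at hlen; omega
    set w := v ++ List.replicate l (lastD v + 1) with hwdef
    have hwlen : w.length = n := by
      rw [hwdef, List.length_append, List.length_replicate, hlen]; omega
    have hawv : aw l w = lastD v := by
      unfold aw
      rw [hwlen, hwdef, List.getD_append _ _ _ _ (by rw [hlen]; omega)]
      unfold lastD
      rw [hlen]
    have hdrop : w.drop (n - l - 1) = lastD v :: List.replicate l (lastD v + 1) := by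
      rw [hwdef, List.drop_append_of_le_length (by rw [hlen]; omega)]
      have : n - l - 1 = v.length - 1 := by omega
      rw [this, drop_length_sub_one hne]
      rfl
    show (v ++ List.replicate l (lastD v + 1)) ∈ CW n ∧
      EndsPat l (v ++ List.replicate l (lastD v + 1)) ∧ j ≤ aw l (v ++ List.replicate l (lastD v + 1))
    rw [← hwdef]
    refine ⟨mem_CW.mpr ⟨cat_append_replicate hcat hne (by omega) (le_refl _) l, hwlen⟩,
      ?_, ?_⟩
    · unfold EndsPat
      rw [hwlen, hawv, hdrop]
    · omega
  · intro w hw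
    rw [Finset.mem_coe, Finset.mem_filter] at hw
    obtain ⟨hw, hpat, hja⟩ := hw
    obtain ⟨hcat, hlen⟩ := mem_CW.mp hw
    have hlast : lastD (w.take (n - l)) = aw l w := by
      unfold lastD aw
      rw [List.length_take, hlen]
      have : min (n - l) n - 1 = n - l - 1 := by omega
      rw [this]
      exact getD_take (by omega)
    show w.take (n - l) ++ List.replicate l (lastD (w.take (n - l)) + 1) = w
    rw [hlast]
    unfold EndsPat at hpat
    rw [hlen] at hpat
    conv_rhs => rw [← List.take_append_drop (n - l) w]
    congr 1
    have : w.drop (n - l) = (w.drop (n - l - 1)).drop 1 := by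
      rw [List.drop_drop]
      congr 1
      omega
    rw [this, hpat]
    rfl
  · intro v hv
    rw [Finset.mem_coe, Finset.mem_filter] at hv
    obtain ⟨hv, -⟩ := hv
    obtain ⟨-, hlen⟩ := mem_CW.mp hv
    show (v ++ List.replicate l (lastD v + 1)).take (n - l) = v
    rw [← hlen]
    exact List.take_left

lemma pascal (a b : ℕ) (h : 1 ≤ a) :
    a.choose (b+1) = (a-1).choose b + (a-1).choose (b+1) := by
  obtain ⟨c, rfl⟩ : ∃ c, a = c + 1 := ⟨a - 1, by omega⟩
  simp only [Nat.add_sub_cancel]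
  exact Nat.choose_succ_succ' c b

lemma Phi_closed : ∀ n, 1 ≤ n → ∀ j,
    Phi n j + (2*n - j).choose (n+1) = (2*n - j).choose n := by
  intro n hn
  induction n, hn using Nat.le_induction with
  | base =>
    intro j
    match j with
    | 0 => decide
    | 1 => decide
    | (j+2) =>
      rw [Phi_zero (by omega), Nat.choose_eq_zero_of_lt (by omega),
        Nat.choose_eq_zero_of_lt (by omega)]
  | succ n hn ih =>
    have key : ∀ d j, n + 2 ≤ j + d →
        Phi (n+1) j + (2*(n+1) - j).choose (n+2) = (2*(n+1) - j).choose (n+1) := by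
      intro d
      induction d with
      | zero =>
        intro j hj
        rw [Phi_zero (by omega), Nat.choose_eq_zero_of_lt (by omega),
          Nat.choose_eq_zero_of_lt (by omega)]
      | succ d ihd =>
        intro j hj
        by_cases hc : n + 2 ≤ j + d
        · exact ihd j hc
        · have hj1 : j + d + 1 = n + 2 := by omega
          match j with
          | 0 =>
            have h1 := ihd 1 (by omega)
            have hP1 : (2*(n+1) - 0).choose (n+2) =
                (2*(n+1) - 1).choose (n+1) + (2*(n+1) - 1).choose (n+2) := by
              rw [← pascal _ _ (by omega)]
              congr 1
            have hP2 : (2*(n+1) - 0).choose (n+1) =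
                (2*(n+1) - 1).choose n + (2*(n+1) - 1).choose (n+1) := by
              rw [← pascal _ _ (by omega)]
              congr 1
            have hsym : (2*(n+1) - 1).choose (n+1) = (2*(n+1) - 1).choose n := by
              rw [← Nat.choose_symm (by omega : n + 1 ≤ 2*(n+1) - 1)]
              congr 1
              omega
            have hz : Phi (n+1) 0 = Phi (n+1) 1 := Phi_zero_one _ (by omega)
            omega
          | (j'+1) =>
            have hinner := ihd (j'+2) (by omega)
            have houter := ih j'
            have hsplit := Phi_split (n+1) (j'+1)
            simp only [show j'+1+1 = j'+2 from rfl] at hsplit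
            have hF := F_step n (j'+1) (by omega)
            simp only [Nat.add_sub_cancel] at hF
            have hP1 : (2*(n+1) - (j'+1)).choose (n+2) =
                (2*n - j').choose (n+1) + (2*n - j').choose (n+2) := by
              rw [pascal _ _ (by omega)]
              congr 2 <;> omega
            have hP2 : (2*(n+1) - (j'+1)).choose (n+1) =
                (2*n - j').choose n + (2*n - j').choose (n+1) := by
              rw [pascal _ _ (by omega)]
              congr 2 <;> omega
            have hinner' : Phi (n+1) (j'+2) + (2*n - j').choose (n+2) =
                (2*n - j').choose (n+1) := by
              have e1 : 2*(n+1) - (j'+2) = 2*n - j' := by omega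
              rw [e1] at hinner
              exact hinner
            omega
    intro j
    exact key (n+2) j (by omega)

lemma PKc_len_zero {l n j : ℕ} (h : n ≤ l + 1) : PKc l n j = 0 := by
  unfold PKc
  apply Finset.sum_eq_zero
  intro w hw
  rw [Finset.mem_filter] at hw
  obtain ⟨hcat, hlen⟩ := mem_CW.mp hw.1
  exact pk_eq_zero (by omega)

lemma PKc_closed (l : ℕ) (hl : 1 ≤ l) : ∀ m, 1 ≤ m → ∀ j,
    PKc l (l + m) j = j * (2*m - 1 - j).choose m + (2*m - 1 - j).choose (m+1) := by
  intro m hm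
  induction m, hm using Nat.le_induction with
  | base =>
    intro j
    match j with
    | 0 =>
      rw [PKc_len_zero (by omega)]
      simp only [Nat.zero_mul, Nat.zero_add]
      rw [Nat.choose_eq_zero_of_lt (by omega)]
    | (j+1) =>
      rw [PKc_zero (by omega), Nat.choose_eq_zero_of_lt (by omega),
        Nat.choose_eq_zero_of_lt (by omega)]
      omega
  | succ m hm ih =>
    have key : ∀ d j, m + 2 ≤ j + d →
        PKc l (l + (m+1)) j = j * (2*(m+1) - 1 - j).choose (m+1) +
          (2*(m+1) - 1 - j).choose (m+2) := by
      intro d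
      induction d with
      | zero =>
        intro j hj
        rw [PKc_zero (by omega), Nat.choose_eq_zero_of_lt (by omega),
          Nat.choose_eq_zero_of_lt (by omega)]
        omega
      | succ d ihd =>
        intro j hj
        by_cases hc : m + 2 ≤ j + d
        · exact ihd j hc
        · have hj1 : j + d + 1 = m + 2 := by omega
          match j with
          | 0 =>
            have h1 := ihd 1 (by omega)
            have hz : PKc l (l + (m+1)) 0 = PKc l (l + (m+1)) 1 :=
              PKc_zero_one _ _ (by omega)
            have hP : (2*(m+1) - 1 - 0).choose (m+2) =
                (2*(m+1) - 1 - 1).choose (m+1) + (2*(m+1) - 1 - 1).choose (m+2) := by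
              have h := pascal (2*(m+1) - 1 - 0) (m+1) (by omega)
              rw [show 2*(m+1) - 1 - 0 - 1 = 2*(m+1) - 1 - 1 from by omega] at h
              exact h
            omega
          | (j'+1) =>
            have hPKsplit : PKc l (l + m + 1) (j'+1) =
                (∑ w ∈ (CW (l + m + 1)).filter (fun w => lastD w = j'+1), pk l w) +
                  PKc l (l + m + 1) (j'+2) := by
              have := PKc_split l (l + m + 1) (j'+1)
              simpa using this
            have hPKstep := PK_step l (l + m) (j'+1) hl (by omega)
            simp only [Nat.add_sub_cancel] at hPKstep
            have hPsi := Psi_eq l (l + m) (j'+1) hl (by omega) (by omega)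
            rw [Nat.add_sub_cancel_left] at hPsi
            have e1 : PKc l (l + m + 1) (j'+1) =
                PKc l (l + m) j' + Phi m (j'+1) + PKc l (l + m + 1) (j'+2) := by
              rw [hPKsplit, hPKstep, hPsi]
            have houter := ih j'
            have hPhi := Phi_closed m hm (j'+1)
            have ePhiIdx : 2*m - (j'+1) = 2*m - 1 - j' := by omega
            rw [ePhiIdx] at hPhi
            have hinner := ihd (j'+2) (by omega)
            have eIdx : 2*(m+1) - 1 - (j'+2) = 2*m - 1 - j' := by omega
            rw [eIdx] at hinner
            have hP1 : (2*(m+1) - 1 - (j'+1)).choose (m+1) =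
                (2*m - 1 - j').choose m + (2*m - 1 - j').choose (m+1) := by
              have h := pascal (2*(m+1) - 1 - (j'+1)) m (by omega)
              rw [show 2*(m+1) - 1 - (j'+1) - 1 = 2*m - 1 - j' from by omega] at h
              exact h
            have hP2 : (2*(m+1) - 1 - (j'+1)).choose (m+2) =
                (2*m - 1 - j').choose (m+1) + (2*m - 1 - j').choose (m+2) := by
              have h := pascal (2*(m+1) - 1 - (j'+1)) (m+1) (by omega)
              rw [show 2*(m+1) - 1 - (j'+1) - 1 = 2*m - 1 - j' from by omega] at h
              exact h
            have egoal : PKc l (l + (m+1)) (j'+1) = PKc l (l + m + 1) (j'+1) := by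
              congr 1
            have hinner2 : PKc l (l + m + 1) (j'+2) = PKc l (l + (m+1)) (j'+2) := by
              congr 1
            rw [egoal, e1, houter, hinner2, hinner, hP1, hP2]
            zify at hPhi ⊢
            linear_combination hPhi
    intro j
    exact key (m+2) j (by omega)

lemma total_eq (l n : ℕ) : (∑ w ∈ CW n, pk l w) = PKc l n 0 := by
  unfold PKc
  congr 1
  rw [Finset.filter_true_of_mem]
  intro w _
  omega

def Tset (l n : ℕ) : Finset (List ℕ × ℕ × ℕ × ℕ) :=
  (CW n).biUnion fun w => ((Finset.range w.length).filter (pkP l w)).image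
    (fun i => (w, i, w.getD i 0, w.getD (i + l + 1) 0))

lemma mem_Tset (l n : ℕ) (p : List ℕ × ℕ × ℕ × ℕ) :
    p ∈ Tset l n ↔ (IsCatalanWord p.1 ∧ p.1.length = n ∧
        1 ≤ p.2.2.2 ∧ p.2.2.2 ≤ p.2.2.1 ∧
        (p.1.drop p.2.1).take (l + 2) =
          p.2.2.1 :: (List.replicate l (p.2.2.1 + 1) ++ [p.2.2.2])) := by
  obtain ⟨w, i, a, b⟩ := p
  simp only [Tset, Finset.mem_biUnion, Finset.mem_image, Finset.mem_filter, Finset.mem_range]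
  constructor
  · rintro ⟨w', hw', i', ⟨⟨hi', hp⟩, heq⟩⟩
    simp only [Prod.mk.injEq] at heq
    obtain ⟨rfl, rfl, rfl, rfl⟩ := heq
    obtain ⟨hcat, hlen⟩ := mem_CW.mp hw'
    exact ⟨hcat, hlen, hp.2.1, hp.2.2, hp.1⟩
  · rintro ⟨hcat, hlen, hb1, hba, heq⟩
    have hlen2 := congrArg List.length heq
    simp only [List.length_take, List.length_drop, List.length_cons, List.length_append,
      List.length_replicate, List.length_singleton] at hlen2
    have hile : i + l + 2 ≤ w.length := by omega
    have hgeta : w.getD i 0 = a := by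
      have e0 : w.getD i 0 = (w.drop i).getD 0 0 := by rw [getD_drop]; norm_num
      rw [e0, ← getD_take (show 0 < l + 2 by omega), heq]
      rfl
    have hgetb : w.getD (i + l + 1) 0 = b := by
      have e0 : w.getD (i + l + 1) 0 = (w.drop i).getD (l + 1) 0 := by
        rw [getD_drop, show i + (l + 1) = i + l + 1 from by omega]
      rw [e0, ← getD_take (show l + 1 < l + 2 by omega), heq, List.getD_cons_succ,
        List.getD_append_right _ _ _ _ (by simp), List.length_replicate, Nat.sub_self]
      rfl
    refine ⟨w, mem_CW.mpr ⟨hcat, hlen⟩, i, ⟨⟨by omega, ?_⟩, ?_⟩⟩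
    · exact ⟨by rw [hgeta, hgetb]; exact heq, by rw [hgetb]; exact hb1,
        by rw [hgeta, hgetb]; exact hba⟩
    · rw [hgeta, hgetb]

lemma card_Tset (l n : ℕ) : (Tset l n).card = ∑ w ∈ CW n, pk l w := by
  unfold Tset
  rw [Finset.card_biUnion]
  · apply Finset.sum_congr rfl
    intro w _
    rw [Finset.card_image_of_injective]
    · rfl
    · intro i1 i2 h
      simpa using congrArg (fun p => p.2.1) h
  · intro w1 _ w2 _ hne
    simp only [Function.onFun]
    rw [Finset.disjoint_left]
    intro p hp1 hp2
    rw [Finset.mem_image] at hp1 hp2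
    obtain ⟨i1, -, h1⟩ := hp1
    obtain ⟨i2, -, h2⟩ := hp2
    have e1 : w1 = p.1 := congrArg Prod.fst h1
    have e2 : w2 = p.1 := congrArg Prod.fst h2
    exact hne (e1.trans e2.symm)

/-- Total number of ℓ-peaks (occurrences of a string a, (a+1)^ℓ, b with a ≥ b ≥ 1,
at some position i) over all Catalan words of length n. -/
theorem total_ell_peaks (n ℓ : ℕ) (hn : 3 ≤ n) (hl1 : 1 ≤ ℓ) (hl2 : ℓ ≤ n - 2) :
    Nat.card {p : List ℕ × ℕ × ℕ × ℕ //
        IsCatalanWord p.1 ∧ p.1.length = n ∧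
        1 ≤ p.2.2.2 ∧ p.2.2.2 ≤ p.2.2.1 ∧
        (p.1.drop p.2.1).take (ℓ + 2) =
          p.2.2.1 :: (List.replicate ℓ (p.2.2.1 + 1) ++ [p.2.2.2])} =
      (2 * n - 2 * ℓ - 1).choose (n - ℓ - 2) := by
  have h1 : Nat.card {p : List ℕ × ℕ × ℕ × ℕ //
      IsCatalanWord p.1 ∧ p.1.length = n ∧
      1 ≤ p.2.2.2 ∧ p.2.2.2 ≤ p.2.2.1 ∧
      (p.1.drop p.2.1).take (ℓ + 2) =
        p.2.2.1 :: (List.replicate ℓ (p.2.2.1 + 1) ++ [p.2.2.2])} =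
      Nat.card {p // p ∈ Tset ℓ n} :=
    Nat.card_congr (Equiv.subtypeEquivRight fun p => (mem_Tset ℓ n p).symm)
  rw [h1, Nat.card_eq_finsetCard, card_Tset, total_eq]
  set m := n - ℓ with hm
  have hm2 : 2 ≤ m := by omega
  have hn' : n = ℓ + m := by omega
  rw [hn', PKc_closed ℓ hl1 m (by omega) 0]
  simp only [Nat.zero_mul, Nat.zero_add, Nat.sub_zero, Nat.mul_zero]
  have hsym : (2*m - 1).choose (m+1) = (2*m - 1).choose (m - 2) := by
    rw [← Nat.choose_symm (by omega : m + 1 ≤ 2*m - 1)]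
    congr 1
    omega
  rw [hsym]
  congr 1 <;> omega
end
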